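/- arXiv:math/9805001 — 3 statements merged into one kernel-verified Lean document; each statement's English description precedes it below -/
import Mathlib

section
/- Let h > 0. Then adjoining the tensor operators J_m to the q_R-conformal symmetries gives an HS-projective representation of the semidirect sum of the Witt algebra with the infinite-dimensional ℤ-graded Heisenberg algebra: for all n, m ∈ ℤ, both defect operators [J_n, J_m] and [L_n, J_m] + m·J_{n+m} on ℂ[z] are Hilbert–Schmidt with respect to the orthogonal monomial basis, i.e. Σ_{k≥0} ‖[J_n, J_m](z^k)‖² / ‖z^k‖² and Σ_{k≥0} ‖([L_n, J_m] + m·J_{n+m})(z^k)‖² / ‖z^k‖² both converge. -/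
open Polynomial

noncomputable section

/-- Operators (ℂ-linear endomorphisms) on ℂ[z], realized as `Polynomial ℂ`. -/
abbrev E : Type := Module.End ℂ (Polynomial ℂ)

/-- The differentiation operator `D(p) = p'`. -/
def Dop : E := Polynomial.derivative

/-- Multiplication by `z`. -/
def Mz : E := LinearMap.mulLeft ℂ (X : Polynomial ℂ)

/-- `l₋₁(p) = z·p`. -/
def lm1 : E := Mz

/-- `l₀(p) = z·p' + h·p`. -/
def l0 (h : ℝ) : E := Mz * Dop + (h : ℂ) • (1 : E)

/-- `l₁(p) = z·p'' + 2h·p'`. -/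
def l1 (h : ℝ) : E := Mz * Dop ^ 2 + ((2 * h : ℝ) : ℂ) • Dop

/-- Commutator `[A,B] = A∘B − B∘A`. -/
def opComm (A B : E) : E := A * B - B * A

/-- The weight `w h n = n!·(2h)(2h+1)⋯(2h+n−1)`, i.e. the squared norm `⟨zⁿ, zⁿ⟩`
in the unitarizable Verma module. -/
def w (h : ℝ) (n : ℕ) : ℝ := (n.factorial : ℝ) * ∏ i ∈ Finset.range n, (2 * h + (i : ℝ))

namespace Stmt13

lemma w_zero (h : ℝ) : w h 0 = 1 := by simp [w]

lemma w_succ (h : ℝ) (n : ℕ) : w h (n + 1) = w h n * (((n : ℝ) + 1) * (2 * h + n)) := by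
  unfold w
  rw [Nat.factorial_succ, Finset.prod_range_succ]
  push_cast
  ring

lemma w_pos {h : ℝ} (hpos : 0 < h) (n : ℕ) : 0 < w h n := by
  induction n with
  | zero => simp [w_zero]
  | succ n ih =>
      rw [w_succ]
      have h1 : (0:ℝ) < (n : ℝ) + 1 := by positivity
      have h2 : (0:ℝ) < 2 * h + n := by positivity
      positivity

lemma w_add (h : ℝ) (k d : ℕ) :
    w h (k + d) = w h k * ∏ i ∈ Finset.range d, (((k : ℝ) + 1 + i) * (2 * h + k + i)) := by
  induction d with
  | zero => simp
  | succ d ih =>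
      rw [← Nat.add_assoc, w_succ, ih, Finset.prod_range_succ, ← mul_assoc]
      push_cast
      ring

/-- product of `x + a` over a list -/
def lpr (x : ℝ) (l : List ℝ) : ℝ := (l.map (fun a => x + a)).prod

@[simp] lemma lpr_nil (x : ℝ) : lpr x [] = 1 := rfl

@[simp] lemma lpr_cons (x a : ℝ) (t : List ℝ) : lpr x (a :: t) = (x + a) * lpr x t := by
  simp [lpr]

lemma lpr_append (x : ℝ) (l₁ l₂ : List ℝ) : lpr x (l₁ ++ l₂) = lpr x l₁ * lpr x l₂ := by
  simp [lpr]

lemma lpr_range (x : ℝ) (f : ℕ → ℝ) (n : ℕ) :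
    lpr x ((List.range n).map f) = ∏ i ∈ Finset.range n, (x + f i) := by
  induction n with
  | zero => simp [lpr]
  | succ n ih =>
      rw [List.range_succ, List.map_append, lpr_append, ih, Finset.prod_range_succ]
      simp [lpr]

lemma sum_range_list (f : ℕ → ℝ) (n : ℕ) :
    ((List.range n).map f).sum = ∑ i ∈ Finset.range n, f i := by
  induction n with
  | zero => simp
  | succ n ih => rw [List.range_succ, List.map_append, List.sum_append, Finset.sum_range_succ, ih]; simp


/-- the polynomial ∏ (X + a) over a list -/
def plin (l : List ℝ) : Polynomial ℝ := (l.map (fun a => Polynomial.X + Polynomial.C a)).prod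

@[simp] lemma plin_nil : plin [] = 1 := rfl

@[simp] lemma plin_cons (a : ℝ) (t : List ℝ) :
    plin (a :: t) = (Polynomial.X + Polynomial.C a) * plin t := by simp [plin]

lemma plin_eval (x : ℝ) (l : List ℝ) : (plin l).eval x = lpr x l := by
  induction l with
  | nil => simp
  | cons a t ih => simp [ih]

lemma plin_natDegree_le (l : List ℝ) : (plin l).natDegree ≤ l.length := by
  induction l with
  | nil => simp
  | cons a t ih =>
      rw [plin_cons]
      refine natDegree_mul_le.trans ?_
      simp only [List.length_cons]
      have : (Polynomial.X + Polynomial.C a).natDegree ≤ 1 := by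
        simpa using natDegree_X_add_C (a := a) |>.le
      omega

lemma plin_coeff_len (l : List ℝ) : (plin l).coeff l.length = 1 := by
  induction l with
  | nil => simp
  | cons a t ih =>
      rw [plin_cons, List.length_cons, add_mul, coeff_add, X_mul, coeff_mul_X,
        coeff_C_mul, ih]
      have : (plin t).coeff (t.length + 1) = 0 :=
        coeff_eq_zero_of_natDegree_lt (lt_of_le_of_lt (plin_natDegree_le t) (Nat.lt_succ_self _))
      rw [this, mul_zero, add_zero]

lemma plin_coeff_pred (a : ℝ) (t : List ℝ) :
    (plin (a :: t)).coeff t.length = a + t.sum := by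
  induction t generalizing a with
  | nil => simp
  | cons b t ih =>
      rw [plin_cons, List.length_cons, add_mul, coeff_add, X_mul, coeff_mul_X, coeff_C_mul]
      have h1 : (plin (b :: t)).coeff t.length = b + t.sum := ih b
      have h2 : (plin (b :: t)).coeff (t.length + 1) = 1 := plin_coeff_len (b :: t)
      rw [h1, h2, List.sum_cons]
      ring

lemma npoly_natDegree (u v Eℓ : List ℝ) (hlen : v.length = u.length)
    (hlenE : Eℓ.length + 1 = u.length) :
    (plin u - plin v - Polynomial.C (u.sum - v.sum) * plin Eℓ).natDegree ≤ u.length - 2 := by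
  rw [natDegree_le_iff_coeff_eq_zero]
  intro N hN
  simp only [coeff_sub, coeff_C_mul]
  rcases (by omega : N + 1 = u.length ∨ N = u.length ∨ u.length < N) with hc | hc | hc
  · -- N = u.length - 1 = Eℓ.length
    obtain ⟨a, t, rfl⟩ : ∃ a t, u = a :: t := by
      cases u with
      | nil => simp at hlenE
      | cons a t => exact ⟨a, t, rfl⟩
    obtain ⟨a', t', rfl⟩ : ∃ a' t', v = a' :: t' := by
      cases v with
      | nil => simp [List.length_cons] at hlen
      | cons a' t' => exact ⟨a', t', rfl⟩
    have hN1 : N = t.length := by simp at hc; omega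
    have hN2 : N = t'.length := by simp at hc hlen; omega
    have hNE : N = Eℓ.length := by simp at hc hlenE; omega
    rw [hN1, plin_coeff_pred a t, hN1.symm.trans hN2, plin_coeff_pred a' t',
      hN2.symm.trans hNE, plin_coeff_len Eℓ, mul_one, List.sum_cons, List.sum_cons]
    ring
  · -- N = u.length
    have hv : (plin v).coeff u.length = 1 := by rw [← hlen]; exact plin_coeff_len v
    have hE : (plin Eℓ).coeff u.length = 0 :=
      coeff_eq_zero_of_natDegree_lt (lt_of_le_of_lt (plin_natDegree_le Eℓ) (by omega))
    rw [hc, plin_coeff_len, hv, hE, mul_zero, sub_zero, sub_self]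
  · have h1 : (plin u).coeff N = 0 :=
      coeff_eq_zero_of_natDegree_lt (lt_of_le_of_lt (plin_natDegree_le u) hc)
    have h2 : (plin v).coeff N = 0 :=
      coeff_eq_zero_of_natDegree_lt (lt_of_le_of_lt (plin_natDegree_le v) (by omega))
    have h3 : (plin Eℓ).coeff N = 0 :=
      coeff_eq_zero_of_natDegree_lt (lt_of_le_of_lt (plin_natDegree_le Eℓ) (by omega))
    rw [h1, h2, h3, mul_zero, sub_self, sub_zero]


lemma poly_eval_bound (p : Polynomial ℝ) (d : ℕ) (hd : p.natDegree ≤ d) :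
    ∃ C : ℝ, 0 ≤ C ∧ ∀ x : ℝ, 0 ≤ x → |p.eval x| ≤ C * (x + 1) ^ d := by
  refine ⟨∑ i ∈ Finset.range (d + 1), |p.coeff i|,
    Finset.sum_nonneg (fun _ _ => abs_nonneg _), fun x hx => ?_⟩
  rw [Polynomial.eval_eq_sum_range' (Nat.lt_succ_of_le hd)]
  refine (Finset.abs_sum_le_sum_abs _ _).trans ?_
  rw [Finset.sum_mul]
  refine Finset.sum_le_sum (fun i hi => ?_)
  rw [abs_mul, abs_pow, abs_of_nonneg hx]
  have h2 : x ^ i ≤ (x + 1) ^ d := by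
    calc x ^ i ≤ (x + 1) ^ i := pow_le_pow_left₀ hx (by linarith) i
    _ ≤ (x + 1) ^ d := pow_le_pow_right₀ (by linarith) (by
        have := Finset.mem_range.mp hi; omega)
  exact mul_le_mul_of_nonneg_left h2 (abs_nonneg _)

lemma nfun_bound (u v Eℓ : List ℝ) (hlen : v.length = u.length)
    (hlenE : Eℓ.length + 1 = u.length) :
    ∃ C : ℝ, 0 ≤ C ∧ ∀ x : ℝ, 0 ≤ x →
      |lpr x u - lpr x v - (u.sum - v.sum) * lpr x Eℓ| ≤ C * (x + 1) ^ (u.length - 2) := by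
  obtain ⟨C, hC, hb⟩ := poly_eval_bound
    (plin u - plin v - Polynomial.C (u.sum - v.sum) * plin Eℓ) _
    (npoly_natDegree u v Eℓ hlen hlenE)
  refine ⟨C, hC, fun x hx => ?_⟩
  have := hb x hx
  simpa [plin_eval] using this

lemma lpr_bounds (M : ℝ) (hM : 1 ≤ M) (l : List ℝ) (hmem : ∀ a ∈ l, |a| ≤ M)
    (x : ℝ) (hx : 2 * M ≤ x) :
    ((x + 1) / 4) ^ l.length ≤ lpr x l ∧ lpr x l ≤ (M * (x + 1)) ^ l.length := by
  induction l with
  | nil => simp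
  | cons a t ih =>
      have ht := ih (fun b hb => hmem b (List.mem_cons_of_mem a hb))
      have ha := hmem a (List.mem_cons_self)
      have hx2 : (2 : ℝ) ≤ x := by linarith
      have hfl : (x + 1) / 4 ≤ x + a := by
        have : -M ≤ a := (abs_le.mp ha).1
        linarith
      have hfu : x + a ≤ M * (x + 1) := by
        have : a ≤ M := (abs_le.mp ha).2
        nlinarith
      have hflpos : (0 : ℝ) < (x + 1) / 4 := by linarith
      have hlpos : 0 < lpr x t := lt_of_lt_of_le (pow_pos hflpos _) ht.1
      constructor
      · rw [lpr_cons, List.length_cons, pow_succ]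
        calc ((x + 1) / 4) ^ t.length * ((x + 1) / 4) ≤ lpr x t * (x + a) :=
              mul_le_mul ht.1 hfl (le_of_lt hflpos) (le_of_lt hlpos)
        _ = (x + a) * lpr x t := mul_comm _ _
      · rw [lpr_cons, List.length_cons, pow_succ]
        calc (x + a) * lpr x t ≤ (M * (x + 1)) * (M * (x + 1)) ^ t.length :=
              mul_le_mul hfu ht.2 (le_of_lt hlpos) (by positivity)
        _ = (M * (x + 1)) ^ t.length * (M * (x + 1)) := mul_comm _ _

lemma summable_of_eventual_bound (g : ℕ → ℝ) (hg : ∀ k, 0 ≤ g k) (C : ℝ) (hC : 0 ≤ C)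
    (K : ℕ) (hb : ∀ k, K ≤ k → g k ≤ C / ((k : ℝ) + 1) ^ 2) : Summable g := by
  rw [← summable_nat_add_iff K]
  have h1 : Summable (fun k : ℕ => 1 / ((k : ℝ)) ^ 2) :=
    Real.summable_one_div_nat_pow.mpr one_lt_two
  have h2 : Summable (fun k : ℕ => 1 / ((k : ℝ) + 1) ^ 2) := by
    have h3 := (summable_nat_add_iff (f := fun k : ℕ => 1 / ((k : ℝ)) ^ 2) 1).mpr h1
    refine h3.congr (fun k => ?_)
    push_cast
    ring
  have hbase : Summable (fun k : ℕ => C / ((k : ℝ) + 1) ^ 2) := by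
    simpa [div_eq_mul_inv, mul_assoc] using h2.mul_left C
  refine Summable.of_nonneg_of_le (fun k => hg _) (fun k => ?_) hbase
  refine (hb (k + K) (Nat.le_add_left K k)).trans ?_
  have hk : ((k : ℝ) + 1) ≤ ((k + K : ℕ) : ℝ) + 1 := by push_cast; linarith [Nat.cast_nonneg (α := ℝ) K]
  gcongr

lemma master (h : ℝ) (c : ℕ → ℝ) (e : ℕ → ℕ)
    (u v Eℓ den pfl qfl : List ℝ) (K₀ : ℕ)
    (hu2 : 2 ≤ u.length) (hlen : v.length = u.length) (hlenE : Eℓ.length + 1 = u.length)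
    (harith : 2 * u.length + pfl.length ≤ 2 * den.length + qfl.length + 2)
    (hc : ∀ k : ℕ, K₀ ≤ k →
      c k = (lpr k u - lpr k v - (u.sum - v.sum) * lpr k Eℓ) / lpr k den)
    (hw : ∀ k : ℕ, K₀ ≤ k → w h (e k) / w h k = lpr k pfl / lpr k qfl) :
    ∃ C : ℝ, ∃ K : ℕ, 0 ≤ C ∧ ∀ k : ℕ, K ≤ k →
      (c k) ^ 2 * w h (e k) / w h k ≤ C / ((k : ℝ) + 1) ^ 2 := by
  obtain ⟨CN, hCN, hNb⟩ := nfun_bound u v Eℓ hlen hlenE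
  have habs : ∀ (l : List ℝ) (a : ℝ), a ∈ l → |a| ≤ (l.map abs).sum := by
    intro l a ha
    exact List.single_le_sum (fun x hx => by
      obtain ⟨y, _, rfl⟩ := List.mem_map.mp hx; exact abs_nonneg y) _
      (List.mem_map_of_mem (f := abs) ha)
  have hsnn : ∀ l : List ℝ, 0 ≤ (l.map abs).sum := by
    intro l
    refine List.sum_nonneg (fun x hx => ?_)
    obtain ⟨y, _, rfl⟩ := List.mem_map.mp hx; exact abs_nonneg y
  set M : ℝ := 1 + (den.map abs).sum + (pfl.map abs).sum + (qfl.map abs).sum with hMdef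
  have hM1 : 1 ≤ M := by
    have := hsnn den; have := hsnn pfl; have := hsnn qfl
    simp only [hMdef]; linarith
  have hmden : ∀ a ∈ den, |a| ≤ M := by
    intro a ha
    have := habs den a ha; have := hsnn pfl; have := hsnn qfl
    simp only [hMdef]; linarith
  have hmpfl : ∀ a ∈ pfl, |a| ≤ M := by
    intro a ha
    have := habs pfl a ha; have := hsnn den; have := hsnn qfl
    simp only [hMdef]; linarith
  have hmqfl : ∀ a ∈ qfl, |a| ≤ M := by
    intro a ha
    have := habs qfl a ha; have := hsnn den; have := hsnn pfl
    simp only [hMdef]; linarith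
  refine ⟨CN ^ 2 * M ^ pfl.length * 4 ^ (2 * den.length + qfl.length), max K₀ ⌈2 * M⌉₊, by positivity, fun k hk => ?_⟩
  have hk0 : K₀ ≤ k := le_trans (le_max_left _ _) hk
  have hkM : 2 * M ≤ (k : ℝ) := by
    have h1 : ⌈2 * M⌉₊ ≤ k := le_trans (le_max_right _ _) hk
    exact (Nat.ceil_le.mp h1)
  set x : ℝ := (k : ℝ) with hxdef
  have hx0 : (0 : ℝ) ≤ x := Nat.cast_nonneg k
  have hx1 : (1 : ℝ) ≤ x + 1 := by linarith
  obtain ⟨hDlb, _⟩ := lpr_bounds M hM1 den hmden x hkM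
  obtain ⟨hPlb, hPub⟩ := lpr_bounds M hM1 pfl hmpfl x hkM
  obtain ⟨hQlb, _⟩ := lpr_bounds M hM1 qfl hmqfl x hkM
  have hbase : (0 : ℝ) < (x + 1) / 4 := by linarith
  have hDpos : 0 < lpr x den := lt_of_lt_of_le (pow_pos hbase _) hDlb
  have hPpos : 0 < lpr x pfl := lt_of_lt_of_le (pow_pos hbase _) hPlb
  have hQpos : 0 < lpr x qfl := lt_of_lt_of_le (pow_pos hbase _) hQlb
  have hN := hNb x hx0
  rw [mul_div_assoc, hc k hk0, hw k hk0, div_pow, div_mul_div_comm]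
  rw [div_le_div_iff₀ (by positivity) (by positivity)]
  set N : ℝ := lpr x u - lpr x v - (u.sum - v.sum) * lpr x Eℓ with hNdef
  calc N ^ 2 * lpr x pfl * (x + 1) ^ 2
      ≤ (CN * (x + 1) ^ (u.length - 2)) ^ 2 * (M * (x + 1)) ^ pfl.length * (x + 1) ^ 2 := by
        have hNsq : N ^ 2 ≤ (CN * (x + 1) ^ (u.length - 2)) ^ 2 := by
          rw [← sq_abs N]
          exact pow_le_pow_left₀ (abs_nonneg _) hN 2
        gcongr
    _ = CN ^ 2 * M ^ pfl.length * (x + 1) ^ (2 * (u.length - 2) + pfl.length + 2) := by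
        rw [mul_pow, mul_pow, ← pow_mul, pow_add, pow_add]
        ring
    _ ≤ CN ^ 2 * M ^ pfl.length * (x + 1) ^ (2 * den.length + qfl.length) := by
        have hexp : 2 * (u.length - 2) + pfl.length + 2 ≤ 2 * den.length + qfl.length := by
          omega
        exact mul_le_mul_of_nonneg_left (pow_le_pow_right₀ hx1 hexp) (by positivity)
    _ = (CN ^ 2 * M ^ pfl.length * 4 ^ (2 * den.length + qfl.length)) * (((x + 1) / 4) ^ (2 * den.length + qfl.length)) := by
        rw [div_pow]
        field_simp
    _ = (CN ^ 2 * M ^ pfl.length * 4 ^ (2 * den.length + qfl.length)) * ((((x + 1) / 4) ^ den.length) ^ 2 * ((x + 1) / 4) ^ qfl.length) := by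
        rw [← pow_mul, ← pow_add, Nat.mul_comm den.length 2]
    _ ≤ (CN ^ 2 * M ^ pfl.length * 4 ^ (2 * den.length + qfl.length)) * ((lpr x den) ^ 2 * lpr x qfl) := by
        gcongr (CN ^ 2 * M ^ pfl.length * 4 ^ (2 * den.length + qfl.length)) * (?_ ^ 2 * ?_)


section BEngines

variable (B : Polynomial ℂ → Polynomial ℂ → ℂ)

lemma B_zero (hB_smull : ∀ (a : ℂ) (p q : Polynomial ℂ), B (a • p) q = a * B p q)
    (q : Polynomial ℂ) : B 0 q = 0 := by
  have h1 := hB_smull 0 0 q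
  simpa using h1

lemma B_neg (hB_smull : ∀ (a : ℂ) (p q : Polynomial ℂ), B (a • p) q = a * B p q)
    (hB_smulr : ∀ (a : ℂ) (p q : Polynomial ℂ), B p (a • q) = (starRingEnd ℂ) a * B p q)
    (p q : Polynomial ℂ) : B (-p) (-q) = B p q := by
  rw [show (-p) = (-1 : ℂ) • p by simp, show (-q) = (-1 : ℂ) • q by simp,
    hB_smull, hB_smulr]
  simp

lemma engine0
    (hB_smull : ∀ (a : ℂ) (p q : Polynomial ℂ), B (a • p) q = a * B p q)
    (T : E) (hT : ∀ k : ℕ, T ((X : Polynomial ℂ) ^ k) = 0) :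
    Summable (fun k : ℕ => (B (T (X ^ k)) (T (X ^ k))).re / (B (X ^ k) (X ^ k)).re) := by
  have hfun : (fun k : ℕ => (B (T (X ^ k)) (T (X ^ k))).re / (B (X ^ k) (X ^ k)).re)
      = fun _ => (0 : ℝ) := by
    funext k
    rw [hT, B_zero B hB_smull]
    simp
  rw [hfun]
  exact summable_zero

lemma engine (h : ℝ) (hpos : 0 < h)
    (hB_smull : ∀ (a : ℂ) (p q : Polynomial ℂ), B (a • p) q = a * B p q)
    (hB_smulr : ∀ (a : ℂ) (p q : Polynomial ℂ), B p (a • q) = (starRingEnd ℂ) a * B p q)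
    (hB_diag : ∀ n : ℕ, B (X ^ n) (X ^ n) = ((w h n : ℝ) : ℂ))
    (T : E) (c : ℕ → ℝ) (e : ℕ → ℕ)
    (hT : ∀ k : ℕ, T ((X : Polynomial ℂ) ^ k) = ((c k : ℝ) : ℂ) • (X : Polynomial ℂ) ^ (e k))
    (C : ℝ) (hC : 0 ≤ C) (K : ℕ)
    (hb : ∀ k, K ≤ k → (c k) ^ 2 * w h (e k) / w h k ≤ C / ((k : ℝ) + 1) ^ 2) :
    Summable (fun k : ℕ => (B (T (X ^ k)) (T (X ^ k))).re / (B (X ^ k) (X ^ k)).re) := by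
  have hfun : (fun k : ℕ => (B (T (X ^ k)) (T (X ^ k))).re / (B (X ^ k) (X ^ k)).re)
      = fun k => (c k) ^ 2 * w h (e k) / w h k := by
    funext k
    rw [hT, hB_smull, hB_smulr, hB_diag, Complex.conj_ofReal]
    rw [show ((c k : ℝ) : ℂ) * (((c k : ℝ) : ℂ) * ((w h (e k) : ℝ) : ℂ))
        = (((c k ^ 2 * w h (e k) : ℝ)) : ℂ) by push_cast; ring]
    rw [hB_diag, Complex.ofReal_re, Complex.ofReal_re]
  rw [hfun]
  refine summable_of_eventual_bound _ (fun k => ?_) C hC K hb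
  have h1 := w_pos hpos (e k)
  have h2 := w_pos hpos k
  positivity

end BEngines

lemma Mz_apply (k : ℕ) : Mz ((X : Polynomial ℂ) ^ k) = X ^ (k + 1) := by
  simp [Mz, LinearMap.mulLeft_apply, pow_succ, mul_comm]

lemma Dpow_apply (a k : ℕ) :
    (Dop ^ a : E) ((X : Polynomial ℂ) ^ k) = ((k.descFactorial a : ℂ)) • X ^ (k - a) := by
  induction a generalizing k with
  | zero => simp
  | succ a ih =>
      rw [pow_succ, Module.End.mul_apply]
      rw [show Dop ((X : Polynomial ℂ) ^ k) = ((k : ℂ)) • X ^ (k - 1) by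
        simp [Dop, Polynomial.derivative_X_pow, Polynomial.smul_eq_C_mul]]
      rw [map_smul, ih (k - 1), smul_smul]
      have hexp : k - 1 - a = k - (a + 1) := by omega
      rw [hexp]
      congr 1
      cases k with
      | zero => simp
      | succ j =>
          rw [Nat.succ_descFactorial_succ]
          push_cast
          ring

lemma Fpow_apply (h : ℝ) (F : E)
    (hF : ∀ n : ℕ, F ((X : Polynomial ℂ) ^ n) = (((n : ℂ) + 2 * h)⁻¹) • X ^ (n + 1))
    (b k : ℕ) :
    (F ^ b : E) ((X : Polynomial ℂ) ^ k)
      = ((((∏ i ∈ Finset.range b, ((k : ℝ) + 2 * h + i))⁻¹ : ℝ)) : ℂ) • X ^ (k + b) := by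
  induction b generalizing k with
  | zero => simp
  | succ b ih =>
      rw [pow_succ, Module.End.mul_apply, hF k, map_smul, ih (k + 1), smul_smul]
      have hexp : k + 1 + b = k + (b + 1) := by omega
      rw [hexp]
      congr 1
      rw [show ((k : ℂ) + 2 * h) = ((((k : ℝ) + 2 * h : ℝ)) : ℂ) by push_cast; ring]
      rw [← Complex.ofReal_inv, ← Complex.ofReal_mul]
      congr 1
      rw [← mul_inv]
      congr 1
      have hp : ∏ i ∈ Finset.range b, (((k + 1 : ℕ) : ℝ) + 2 * h + i)
          = ∏ i ∈ Finset.range b, ((k : ℝ) + 2 * h + (i + 1)) := by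
        refine Finset.prod_congr rfl (fun i _ => ?_)
        push_cast
        ring
      rw [hp, Finset.prod_range_succ']
      push_cast
      ring

lemma Lpos_apply (h : ℝ) (L : ℤ → E)
    (hLpos : ∀ k : ℕ, L (k : ℤ) = Mz * Dop ^ (k + 1) + (((k : ℂ) + 1) * (h : ℂ)) • Dop ^ k)
    (nn k : ℕ) :
    L (nn : ℤ) ((X : Polynomial ℂ) ^ k)
      = ((((k.descFactorial (nn + 1) : ℝ) + ((nn : ℝ) + 1) * h * (k.descFactorial nn) : ℝ)) : ℂ)
          • X ^ (k - nn) := by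
  rw [hLpos nn]
  simp only [LinearMap.add_apply, Module.End.mul_apply, LinearMap.smul_apply]
  rw [Dpow_apply (nn + 1) k, Dpow_apply nn k, map_smul, Mz_apply]
  by_cases hk : nn + 1 ≤ k
  · have h1 : k - (nn + 1) + 1 = k - nn := by omega
    rw [h1, smul_smul, ← add_smul]
    congr 1
    push_cast
    ring
  · have h1 : k.descFactorial (nn + 1) = 0 := Nat.descFactorial_eq_zero_iff_lt.mpr (by omega)
    rw [h1]
    simp only [Nat.cast_zero, zero_smul, smul_zero]
    rw [smul_smul, zero_add]
    congr 1
    push_cast [h1]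
    ring

lemma Lneg_apply (h : ℝ) (L : ℤ → E)
    (hLneg : ∀ k : ℕ, 1 ≤ k → ∀ n : ℕ,
      L (-(k : ℤ)) (X ^ n) =
        (((n : ℂ) + ((k : ℂ) + 1) * (h : ℂ)) /
            ∏ i ∈ Finset.range k, ((n : ℂ) + 2 * h + (i : ℂ))) • X ^ (n + k))
    (b : ℕ) (hb : 1 ≤ b) (k : ℕ) :
    L (-(b : ℤ)) ((X : Polynomial ℂ) ^ k)
      = (((((k : ℝ) + ((b : ℝ) + 1) * h) / ∏ i ∈ Finset.range b, ((k : ℝ) + 2 * h + i) : ℝ)) : ℂ)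
          • X ^ (k + b) := by
  rw [hLneg b hb k]
  congr 1
  push_cast
  ring


lemma dF_cast (a k : ℕ) (hak : a ≤ k) :
    ((k.descFactorial a : ℝ)) = ∏ i ∈ Finset.range a, ((k : ℝ) - i) := by
  rw [Nat.descFactorial_eq_prod_range, Nat.cast_prod]
  refine Finset.prod_congr rfl (fun i hi => ?_)
  have hik : i ≤ k := le_trans (le_of_lt (Finset.mem_range.mp hi)) hak
  rw [Nat.cast_sub hik]

lemma sum_affine (n : ℕ) (f : ℕ → ℝ) (c : ℝ) :
    ∑ i ∈ Finset.range n, (f i + c) = (∑ i ∈ Finset.range n, f i) + n * c := by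
  rw [Finset.sum_add_distrib, Finset.sum_const, Finset.card_range, nsmul_eq_mul]

lemma hw_up (h : ℝ) (hpos : 0 < h) (d : ℕ) (k : ℕ) :
    w h (k + d) / w h k
      = lpr k (((List.range d).map fun i : ℕ => (1 : ℝ) + i)
          ++ ((List.range d).map fun i : ℕ => 2 * h + i)) / lpr k [] := by
  rw [lpr_nil, div_one, lpr_append, lpr_range, lpr_range, w_add,
    mul_div_cancel_left₀ _ (w_pos hpos k).ne', ← Finset.prod_mul_distrib]
  exact Finset.prod_congr rfl fun i _ => by ring

lemma hw_down (h : ℝ) (hpos : 0 < h) (d : ℕ) (k : ℕ) (hk : d ≤ k) :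
    w h (k - d) / w h k
      = lpr k [] / lpr k (((List.range d).map fun i : ℕ => (1 : ℝ) + i - d)
          ++ ((List.range d).map fun i : ℕ => 2 * h + i - d)) := by
  have hcast : ((k - d : ℕ) : ℝ) = (k : ℝ) - d := by
    rw [Nat.cast_sub hk]
  have hw1 : w h k = w h (k - d)
      * ∏ i ∈ Finset.range d, ((((k : ℝ) - d) + 1 + i) * (2 * h + ((k : ℝ) - d) + i)) := by
    conv_lhs => rw [show k = (k - d) + d by omega]
    rw [w_add, hcast]
  rw [lpr_nil, lpr_append, lpr_range, lpr_range, hw1]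
  have hprodeq : (∏ i ∈ Finset.range d, ((k : ℝ) + ((1 : ℝ) + i - d)))
      * ∏ i ∈ Finset.range d, ((k : ℝ) + (2 * h + i - d))
      = ∏ i ∈ Finset.range d, ((((k : ℝ) - d) + 1 + i) * (2 * h + ((k : ℝ) - d) + i)) := by
    rw [← Finset.prod_mul_distrib]
    exact Finset.prod_congr rfl fun i _ => by ring
  rw [hprodeq, div_mul_cancel_left₀ (w_pos hpos (k - d)).ne', one_div]

def cA (h : ℝ) (a b : ℕ) (k : ℕ) : ℝ :=
  (∏ i ∈ Finset.range b, ((k : ℝ) + 2 * h + i))⁻¹ * ((k + b).descFactorial a : ℝ)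
  - (k.descFactorial a : ℝ) * (∏ i ∈ Finset.range b, (((k - a : ℕ) : ℝ) + 2 * h + i))⁻¹

lemma caseA_hT (h : ℝ) (F : E)
    (hF : ∀ n : ℕ, F ((X : Polynomial ℂ) ^ n) = (((n : ℂ) + 2 * h)⁻¹) • X ^ (n + 1))
    (a b : ℕ) (k : ℕ) :
    (opComm (Dop ^ a) (F ^ b)) ((X : Polynomial ℂ) ^ k)
      = ((cA h a b k : ℝ) : ℂ) • (X : Polynomial ℂ) ^ (k + b - a) := by
  rw [opComm, LinearMap.sub_apply, Module.End.mul_apply, Module.End.mul_apply,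
    Fpow_apply h F hF b k, Dpow_apply a k, map_smul, map_smul,
    Dpow_apply a (k + b), Fpow_apply h F hF b (k - a), smul_smul, smul_smul]
  by_cases hk : a ≤ k
  · rw [show k - a + b = k + b - a by omega, ← sub_smul]
    congr 1
    simp only [cA]
    push_cast
    ring
  · have h0 : k.descFactorial a = 0 := Nat.descFactorial_eq_zero_iff_lt.mpr (by omega)
    rw [h0]
    simp only [Nat.cast_zero, zero_mul, zero_smul, sub_zero]
    congr 1
    simp only [cA, h0]
    push_cast
    ring

lemma caseA (h : ℝ) (hpos : 0 < h) (F : E)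
    (hF : ∀ n : ℕ, F ((X : Polynomial ℂ) ^ n) = (((n : ℂ) + 2 * h)⁻¹) • X ^ (n + 1))
    (B : Polynomial ℂ → Polynomial ℂ → ℂ)
    (hB_smull : ∀ (a : ℂ) (p q : Polynomial ℂ), B (a • p) q = a * B p q)
    (hB_smulr : ∀ (a : ℂ) (p q : Polynomial ℂ), B p (a • q) = (starRingEnd ℂ) a * B p q)
    (hB_diag : ∀ n : ℕ, B (X ^ n) (X ^ n) = ((w h n : ℝ) : ℂ))
    (a b : ℕ) (ha : 1 ≤ a) (hb : 1 ≤ b) :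
    Summable (fun k : ℕ =>
      (B ((opComm (Dop ^ a) (F ^ b)) (X ^ k)) ((opComm (Dop ^ a) (F ^ b)) (X ^ k))).re /
        (B (X ^ k) (X ^ k)).re) := by
  have hT : ∀ k : ℕ, (opComm (Dop ^ a) (F ^ b)) ((X : Polynomial ℂ) ^ k)
      = ((cA h a b k : ℝ) : ℂ) • (X : Polynomial ℂ) ^ (k + b - a) :=
    fun k => caseA_hT h F hF a b k
  set u : List ℝ := ((List.range a).map fun i : ℕ => (b : ℝ) - i)
      ++ ((List.range b).map fun i : ℕ => 2 * h + i - a) with hu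
  set v : List ℝ := ((List.range a).map fun i : ℕ => -(i : ℝ))
      ++ ((List.range b).map fun i : ℕ => 2 * h + i) with hv
  set Eℓ : List ℝ := (List.range (a + b - 1)).map fun _ => (0 : ℝ) with hE
  set den : List ℝ := ((List.range b).map fun i : ℕ => 2 * h + i)
      ++ ((List.range b).map fun i : ℕ => 2 * h + i - a) with hden
  have hsum : u.sum = v.sum := by
    simp only [hu, hv, List.sum_append, sum_range_list]
    rw [show ∑ i ∈ Finset.range a, ((b : ℝ) - i) = ∑ i ∈ Finset.range a, (-(i : ℝ) + b) from
      Finset.sum_congr rfl fun i _ => by ring]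
    rw [show ∑ i ∈ Finset.range b, (2 * h + (i : ℝ) - a)
        = ∑ i ∈ Finset.range b, ((2 * h + i) + (-(a : ℝ))) from
      Finset.sum_congr rfl fun i _ => by ring]
    rw [sum_affine, sum_affine]
    ring
  have hc : ∀ k : ℕ, a + b + 1 ≤ k →
      cA h a b k = (lpr k u - lpr k v - (u.sum - v.sum) * lpr k Eℓ) / lpr k den := by
    intro k hk
    rw [hsum, sub_self, zero_mul, sub_zero]
    simp only [hu, hv, hden, lpr_append, lpr_range]
    have hak : a ≤ k := by omega
    have hP1 : ∏ i ∈ Finset.range b, ((k : ℝ) + (2 * h + i))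
        = ∏ i ∈ Finset.range b, ((k : ℝ) + 2 * h + i) :=
      Finset.prod_congr rfl fun i _ => by ring
    have hkk : ((k - a : ℕ) : ℝ) = (k : ℝ) - a := Nat.cast_sub hak
    have hP2 : ∏ i ∈ Finset.range b, ((k : ℝ) + (2 * h + i - a))
        = ∏ i ∈ Finset.range b, ((k : ℝ) - a + 2 * h + i) :=
      Finset.prod_congr rfl fun i _ => by ring
    have hU1 : ∏ i ∈ Finset.range a, ((k : ℝ) + ((b : ℝ) - i)) = (((k + b).descFactorial a : ℝ)) := by
      rw [dF_cast a (k + b) (by omega)]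
      refine Finset.prod_congr rfl fun i _ => ?_
      push_cast
      ring
    have hV1 : ∏ i ∈ Finset.range a, ((k : ℝ) + -(i : ℝ)) = ((k.descFactorial a : ℝ)) := by
      rw [dF_cast a k hak]
      exact Finset.prod_congr rfl fun i _ => by ring
    have hpos1 : 0 < ∏ i ∈ Finset.range b, ((k : ℝ) + 2 * h + i) :=
      Finset.prod_pos fun i _ => by positivity
    have hpos2 : 0 < ∏ i ∈ Finset.range b, ((k : ℝ) - a + 2 * h + i) := by
      refine Finset.prod_pos fun i _ => ?_
      have hka : (a : ℝ) ≤ (k : ℝ) := Nat.cast_le.mpr hak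
      have hi0 : (0 : ℝ) ≤ (i : ℝ) := Nat.cast_nonneg i
      linarith
    rw [hP1, hP2, hU1, hV1]
    simp only [cA, hkk]
    rw [eq_div_iff (mul_pos hpos1 hpos2).ne']
    field_simp [hpos1.ne', hpos2.ne']
    try ring
  rcases le_or_gt a b with hab | hab
  · obtain ⟨d, rfl⟩ : ∃ d, b = a + d := ⟨b - a, by omega⟩
    have hwK : ∀ k : ℕ, a + (a + d) + 1 ≤ k →
        w h (k + (a + d) - a) / w h k
          = lpr k (((List.range d).map fun i : ℕ => (1 : ℝ) + i)
              ++ ((List.range d).map fun i : ℕ => 2 * h + i)) / lpr k [] := by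
      intro k _
      rw [show k + (a + d) - a = k + d by omega]
      exact hw_up h hpos d k
    obtain ⟨C, K, hC, hbound⟩ := master h (cA h a (a + d)) (fun k => k + (a + d) - a)
      u v Eℓ den _ [] (a + (a + d) + 1)
      (by simp [hu]; omega) (by simp [hu, hv]) (by simp [hu, hE]; omega)
      (by simp [hu, hden]; omega) hc hwK
    exact engine B h hpos hB_smull hB_smulr hB_diag _ _ _ hT C hC K hbound
  · obtain ⟨d, rfl⟩ : ∃ d, a = b + d := ⟨a - b, by omega⟩
    have hwK : ∀ k : ℕ, (b + d) + b + 1 ≤ k →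
        w h (k + b - (b + d)) / w h k
          = lpr k [] / lpr k (((List.range d).map fun i : ℕ => (1 : ℝ) + i - d)
              ++ ((List.range d).map fun i : ℕ => 2 * h + i - d)) := by
      intro k hk
      rw [show k + b - (b + d) = k - d by omega]
      exact hw_down h hpos d k (by omega)
    obtain ⟨C, K, hC, hbound⟩ := master h (cA h (b + d) b) (fun k => k + b - (b + d))
      u v Eℓ den [] _ ((b + d) + b + 1)
      (by simp [hu]; omega) (by simp [hu, hv]) (by simp [hu, hE]; omega)
      (by simp [hu, hden]; omega) hc hwK
    exact engine B h hpos hB_smull hB_smulr hB_diag _ _ _ hT C hC K hbound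


def cL (h : ℝ) (nn x : ℕ) : ℝ :=
  (x.descFactorial (nn + 1) : ℝ) + ((nn : ℝ) + 1) * h * (x.descFactorial nn)

lemma Lpos_apply' (h : ℝ) (L : ℤ → E)
    (hLpos : ∀ k : ℕ, L (k : ℤ) = Mz * Dop ^ (k + 1) + (((k : ℂ) + 1) * (h : ℂ)) • Dop ^ k)
    (nn k : ℕ) :
    L (nn : ℤ) ((X : Polynomial ℂ) ^ k) = ((cL h nn k : ℝ) : ℂ) • X ^ (k - nn) :=
  Lpos_apply h L hLpos nn k

lemma cL_zero (h : ℝ) (nn k : ℕ) (hk : k < nn) : cL h nn k = 0 := by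
  have h1 : k.descFactorial (nn + 1) = 0 := Nat.descFactorial_eq_zero_iff_lt.mpr (by omega)
  have h2 : k.descFactorial nn = 0 := Nat.descFactorial_eq_zero_iff_lt.mpr hk
  simp [cL, h1, h2]

lemma cL_eq (h : ℝ) (nn x : ℕ) (hx : nn ≤ x) :
    cL h nn x = (∏ i ∈ Finset.range nn, ((x : ℝ) - i)) * (((x : ℝ) - nn) + ((nn : ℝ) + 1) * h) := by
  have h1 : x.descFactorial (nn + 1) = (x - nn) * x.descFactorial nn := Nat.descFactorial_succ x nn
  rw [cL, h1, ← dF_cast nn x hx, Nat.cast_mul, Nat.cast_sub hx]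
  ring

def cBg (h : ℝ) (nn b d : ℕ) (k : ℕ) : ℝ :=
  (∏ i ∈ Finset.range b, ((k : ℝ) + 2 * h + i))⁻¹ * cL h nn (k + b)
  - cL h nn k * (∏ i ∈ Finset.range b, (((k - nn : ℕ) : ℝ) + 2 * h + i))⁻¹
  - b * (k.descFactorial d : ℝ)

lemma caseBg_hT (h : ℝ) (F : E)
    (hF : ∀ n : ℕ, F ((X : Polynomial ℂ) ^ n) = (((n : ℂ) + 2 * h)⁻¹) • X ^ (n + 1))
    (L : ℤ → E)
    (hLpos : ∀ k : ℕ, L (k : ℤ) = Mz * Dop ^ (k + 1) + (((k : ℂ) + 1) * (h : ℂ)) • Dop ^ k)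
    (b d : ℕ) (k : ℕ) :
    (opComm (L ((b + d : ℕ) : ℤ)) (F ^ b) + (-(b : ℂ)) • (Dop ^ d : E)) ((X : Polynomial ℂ) ^ k)
      = ((cBg h (b + d) b d k : ℝ) : ℂ) • (X : Polynomial ℂ) ^ (k + b - (b + d)) := by
  rw [LinearMap.add_apply, LinearMap.smul_apply, opComm, LinearMap.sub_apply,
    Module.End.mul_apply, Module.End.mul_apply,
    Fpow_apply h F hF b k, Lpos_apply' h L hLpos (b + d) k, map_smul, map_smul,
    Lpos_apply' h L hLpos (b + d) (k + b), Fpow_apply h F hF b (k - (b + d)),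
    Dpow_apply d k, smul_smul, smul_smul, smul_smul]
  rw [show k - d = k + b - (b + d) by omega]
  by_cases hk : b + d ≤ k
  · rw [show k - (b + d) + b = k + b - (b + d) by omega, ← sub_smul, ← add_smul]
    congr 1
    simp only [cBg]
    push_cast
    ring
  · have h0 : cL h (b + d) k = 0 := cL_zero h (b + d) k (by omega)
    rw [h0]
    simp only [Complex.ofReal_zero, zero_mul, zero_smul, sub_zero]
    rw [← add_smul]
    congr 1
    simp only [cBg, h0]
    push_cast
    ring

lemma caseBg (h : ℝ) (hpos : 0 < h) (F : E)
    (hF : ∀ n : ℕ, F ((X : Polynomial ℂ) ^ n) = (((n : ℂ) + 2 * h)⁻¹) • X ^ (n + 1))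
    (L : ℤ → E)
    (hLpos : ∀ k : ℕ, L (k : ℤ) = Mz * Dop ^ (k + 1) + (((k : ℂ) + 1) * (h : ℂ)) • Dop ^ k)
    (B : Polynomial ℂ → Polynomial ℂ → ℂ)
    (hB_smull : ∀ (a : ℂ) (p q : Polynomial ℂ), B (a • p) q = a * B p q)
    (hB_smulr : ∀ (a : ℂ) (p q : Polynomial ℂ), B p (a • q) = (starRingEnd ℂ) a * B p q)
    (hB_diag : ∀ n : ℕ, B (X ^ n) (X ^ n) = ((w h n : ℝ) : ℂ))
    (b d : ℕ) (hb : 1 ≤ b) :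
    Summable (fun k : ℕ =>
      (B (((opComm (L ((b + d : ℕ) : ℤ)) (F ^ b) + (-(b : ℂ)) • (Dop ^ d : E))) (X ^ k))
         (((opComm (L ((b + d : ℕ) : ℤ)) (F ^ b) + (-(b : ℂ)) • (Dop ^ d : E))) (X ^ k))).re /
        (B (X ^ k) (X ^ k)).re) := by
  set nn : ℕ := b + d with hnn
  have hT : ∀ k : ℕ,
      ((opComm (L ((b + d : ℕ) : ℤ)) (F ^ b) + (-(b : ℂ)) • (Dop ^ d : E))) ((X : Polynomial ℂ) ^ k)
        = ((cBg h nn b d k : ℝ) : ℂ) • (X : Polynomial ℂ) ^ (k + b - nn) :=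
    fun k => caseBg_hT h F hF L hLpos b d k
  set u : List ℝ := (((List.range nn).map fun i : ℕ => (b : ℝ) - i)
      ++ [(b : ℝ) - nn + ((nn : ℝ) + 1) * h])
      ++ ((List.range b).map fun i : ℕ => 2 * h + i - nn) with hu
  set v : List ℝ := (((List.range nn).map fun i : ℕ => -(i : ℝ))
      ++ [-(nn : ℝ) + ((nn : ℝ) + 1) * h])
      ++ ((List.range b).map fun i : ℕ => 2 * h + i) with hv
  set Eℓ : List ℝ := (((List.range d).map fun i : ℕ => -(i : ℝ))
      ++ ((List.range b).map fun i : ℕ => 2 * h + i))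
      ++ ((List.range b).map fun i : ℕ => 2 * h + i - nn) with hE
  set den : List ℝ := ((List.range b).map fun i : ℕ => 2 * h + i)
      ++ ((List.range b).map fun i : ℕ => 2 * h + i - nn) with hden
  have hsum : u.sum - v.sum = (b : ℝ) := by
    simp only [hu, hv, List.sum_append, sum_range_list, List.sum_cons, List.sum_nil]
    rw [show ∑ i ∈ Finset.range nn, ((b : ℝ) - i) = ∑ i ∈ Finset.range nn, (-(i : ℝ) + b) from
      Finset.sum_congr rfl fun i _ => by ring]
    rw [show ∑ i ∈ Finset.range b, (2 * h + (i : ℝ) - nn)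
        = ∑ i ∈ Finset.range b, ((2 * h + i) + (-(nn : ℝ))) from
      Finset.sum_congr rfl fun i _ => by ring]
    rw [sum_affine, sum_affine]
    ring
  have hc : ∀ k : ℕ, nn + b + d + 2 ≤ k →
      cBg h nn b d k = (lpr k u - lpr k v - (u.sum - v.sum) * lpr k Eℓ) / lpr k den := by
    intro k hk
    rw [hsum]
    simp only [hu, hv, hE, hden, lpr_append, lpr_range, lpr_cons, lpr_nil, mul_one]
    have hnk : nn ≤ k := by omega
    have hdk : d ≤ k := by omega
    have hkk : ((k - nn : ℕ) : ℝ) = (k : ℝ) - nn := Nat.cast_sub hnk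
    have hP1 : ∏ i ∈ Finset.range b, ((k : ℝ) + (2 * h + i))
        = ∏ i ∈ Finset.range b, ((k : ℝ) + 2 * h + i) :=
      Finset.prod_congr rfl fun i _ => by ring
    have hP2 : ∏ i ∈ Finset.range b, ((k : ℝ) + (2 * h + i - nn))
        = ∏ i ∈ Finset.range b, ((k : ℝ) - nn + 2 * h + i) :=
      Finset.prod_congr rfl fun i _ => by ring
    have hU1 : ∏ i ∈ Finset.range nn, ((k : ℝ) + ((b : ℝ) - i))
        = ∏ i ∈ Finset.range nn, (((k + b : ℕ) : ℝ) - i) :=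
      Finset.prod_congr rfl fun i _ => by push_cast; ring
    have hV1 : ∏ i ∈ Finset.range nn, ((k : ℝ) + -(i : ℝ))
        = ∏ i ∈ Finset.range nn, ((k : ℝ) - i) :=
      Finset.prod_congr rfl fun i _ => by ring
    have hE1 : ∏ i ∈ Finset.range d, ((k : ℝ) + -(i : ℝ)) = ((k.descFactorial d : ℝ)) := by
      rw [dF_cast d k hdk]
      exact Finset.prod_congr rfl fun i _ => by ring
    have hpos1 : 0 < ∏ i ∈ Finset.range b, ((k : ℝ) + 2 * h + i) :=
      Finset.prod_pos fun i _ => by positivity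
    have hpos2 : 0 < ∏ i ∈ Finset.range b, ((k : ℝ) - nn + 2 * h + i) := by
      refine Finset.prod_pos fun i _ => ?_
      have h1 : (nn : ℝ) ≤ (k : ℝ) := Nat.cast_le.mpr hnk
      have h2 : (0 : ℝ) ≤ (i : ℝ) := Nat.cast_nonneg i
      linarith
    rw [hP1, hP2, hU1, hV1, hE1]
    simp only [cBg, cL_eq h nn (k + b) (by omega), cL_eq h nn k hnk, hkk]
    rw [eq_div_iff (mul_pos hpos1 hpos2).ne']
    push_cast
    field_simp [hpos1.ne', hpos2.ne']
    try ring
  have hwK : ∀ k : ℕ, nn + b + d + 2 ≤ k →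
      w h (k + b - nn) / w h k
        = lpr k [] / lpr k (((List.range d).map fun i : ℕ => (1 : ℝ) + i - d)
            ++ ((List.range d).map fun i : ℕ => 2 * h + i - d)) := by
    intro k hk
    rw [show k + b - nn = k - d by omega]
    exact hw_down h hpos d k (by omega)
  obtain ⟨C, K, hC, hbound⟩ := master h (cBg h nn b d) (fun k => k + b - nn)
    u v Eℓ den [] _ (nn + b + d + 2)
    (by simp [hu]; omega) (by simp [hu, hv]) (by simp [hu, hE]; omega)
    (by simp [hu, hden]; omega) hc hwK
  exact engine B h hpos hB_smull hB_smulr hB_diag _ _ _ hT C hC K hbound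


def cBl (h : ℝ) (nn b d : ℕ) (k : ℕ) : ℝ :=
  (∏ i ∈ Finset.range b, ((k : ℝ) + 2 * h + i))⁻¹ * cL h nn (k + b)
  - cL h nn k * (∏ i ∈ Finset.range b, (((k - nn : ℕ) : ℝ) + 2 * h + i))⁻¹
  - b * (∏ i ∈ Finset.range d, ((k : ℝ) + 2 * h + i))⁻¹

lemma caseBl_hT (h : ℝ) (F : E)
    (hF : ∀ n : ℕ, F ((X : Polynomial ℂ) ^ n) = (((n : ℂ) + 2 * h)⁻¹) • X ^ (n + 1))
    (L : ℤ → E)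
    (hLpos : ∀ k : ℕ, L (k : ℤ) = Mz * Dop ^ (k + 1) + (((k : ℂ) + 1) * (h : ℂ)) • Dop ^ k)
    (nn d : ℕ) (k : ℕ) :
    (opComm (L (nn : ℤ)) (F ^ (nn + d)) + (-((nn + d : ℕ) : ℂ)) • (F ^ d : E))
        ((X : Polynomial ℂ) ^ k)
      = ((cBl h nn (nn + d) d k : ℝ) : ℂ) • (X : Polynomial ℂ) ^ (k + (nn + d) - nn) := by
  rw [LinearMap.add_apply, LinearMap.smul_apply, opComm, LinearMap.sub_apply,
    Module.End.mul_apply, Module.End.mul_apply,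
    Fpow_apply h F hF (nn + d) k, Lpos_apply' h L hLpos nn k, map_smul, map_smul,
    Lpos_apply' h L hLpos nn (k + (nn + d)), Fpow_apply h F hF (nn + d) (k - nn),
    Fpow_apply h F hF d k, smul_smul, smul_smul, smul_smul]
  rw [show k + (nn + d) - nn = k + d by omega]
  by_cases hk : nn ≤ k
  · rw [show k - nn + (nn + d) = k + d by omega, ← sub_smul, ← add_smul]
    congr 1
    simp only [cBl]
    push_cast
    ring
  · have h0 : cL h nn k = 0 := cL_zero h nn k (by omega)
    rw [h0]
    simp only [Complex.ofReal_zero, zero_mul, zero_smul, sub_zero]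
    rw [← add_smul]
    congr 1
    simp only [cBl, h0]
    push_cast
    ring

lemma caseBl (h : ℝ) (hpos : 0 < h) (F : E)
    (hF : ∀ n : ℕ, F ((X : Polynomial ℂ) ^ n) = (((n : ℂ) + 2 * h)⁻¹) • X ^ (n + 1))
    (L : ℤ → E)
    (hLpos : ∀ k : ℕ, L (k : ℤ) = Mz * Dop ^ (k + 1) + (((k : ℂ) + 1) * (h : ℂ)) • Dop ^ k)
    (B : Polynomial ℂ → Polynomial ℂ → ℂ)
    (hB_smull : ∀ (a : ℂ) (p q : Polynomial ℂ), B (a • p) q = a * B p q)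
    (hB_smulr : ∀ (a : ℂ) (p q : Polynomial ℂ), B p (a • q) = (starRingEnd ℂ) a * B p q)
    (hB_diag : ∀ n : ℕ, B (X ^ n) (X ^ n) = ((w h n : ℝ) : ℂ))
    (nn d : ℕ) (hd : 1 ≤ d) :
    Summable (fun k : ℕ =>
      (B (((opComm (L (nn : ℤ)) (F ^ (nn + d)) + (-((nn + d : ℕ) : ℂ)) • (F ^ d : E))) (X ^ k))
         (((opComm (L (nn : ℤ)) (F ^ (nn + d)) + (-((nn + d : ℕ) : ℂ)) • (F ^ d : E))) (X ^ k))).re /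
        (B (X ^ k) (X ^ k)).re) := by
  set b : ℕ := nn + d with hbd
  have hT : ∀ k : ℕ,
      ((opComm (L (nn : ℤ)) (F ^ (nn + d)) + (-((nn + d : ℕ) : ℂ)) • (F ^ d : E)))
          ((X : Polynomial ℂ) ^ k)
        = ((cBl h nn b d k : ℝ) : ℂ) • (X : Polynomial ℂ) ^ (k + b - nn) :=
    fun k => caseBl_hT h F hF L hLpos nn d k
  set u : List ℝ := ((((List.range nn).map fun i : ℕ => (b : ℝ) - i)
      ++ [(b : ℝ) - nn + ((nn : ℝ) + 1) * h])
      ++ ((List.range b).map fun i : ℕ => 2 * h + i - nn))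
      ++ ((List.range d).map fun i : ℕ => 2 * h + i) with hu
  set v : List ℝ := ((((List.range nn).map fun i : ℕ => -(i : ℝ))
      ++ [-(nn : ℝ) + ((nn : ℝ) + 1) * h])
      ++ ((List.range b).map fun i : ℕ => 2 * h + i))
      ++ ((List.range d).map fun i : ℕ => 2 * h + i) with hv
  set Eℓ : List ℝ := ((List.range b).map fun i : ℕ => 2 * h + i)
      ++ ((List.range b).map fun i : ℕ => 2 * h + i - nn) with hE
  set den : List ℝ := (((List.range b).map fun i : ℕ => 2 * h + i)
      ++ ((List.range b).map fun i : ℕ => 2 * h + i - nn))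
      ++ ((List.range d).map fun i : ℕ => 2 * h + i) with hden
  have hsum : u.sum - v.sum = (b : ℝ) := by
    simp only [hu, hv, List.sum_append, sum_range_list, List.sum_cons, List.sum_nil]
    rw [show ∑ i ∈ Finset.range nn, ((b : ℝ) - i) = ∑ i ∈ Finset.range nn, (-(i : ℝ) + b) from
      Finset.sum_congr rfl fun i _ => by ring]
    rw [show ∑ i ∈ Finset.range b, (2 * h + (i : ℝ) - nn)
        = ∑ i ∈ Finset.range b, ((2 * h + i) + (-(nn : ℝ))) from
      Finset.sum_congr rfl fun i _ => by ring]
    rw [sum_affine, sum_affine]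
    ring
  have hc : ∀ k : ℕ, nn + b + d + 2 ≤ k →
      cBl h nn b d k = (lpr k u - lpr k v - (u.sum - v.sum) * lpr k Eℓ) / lpr k den := by
    intro k hk
    rw [hsum]
    simp only [hu, hv, hE, hden, lpr_append, lpr_range, lpr_cons, lpr_nil, mul_one]
    have hnk : nn ≤ k := by omega
    have hkk : ((k - nn : ℕ) : ℝ) = (k : ℝ) - nn := Nat.cast_sub hnk
    have hP1 : ∏ i ∈ Finset.range b, ((k : ℝ) + (2 * h + i))
        = ∏ i ∈ Finset.range b, ((k : ℝ) + 2 * h + i) :=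
      Finset.prod_congr rfl fun i _ => by ring
    have hP2 : ∏ i ∈ Finset.range b, ((k : ℝ) + (2 * h + i - nn))
        = ∏ i ∈ Finset.range b, ((k : ℝ) - nn + 2 * h + i) :=
      Finset.prod_congr rfl fun i _ => by ring
    have hP3 : ∏ i ∈ Finset.range d, ((k : ℝ) + (2 * h + i))
        = ∏ i ∈ Finset.range d, ((k : ℝ) + 2 * h + i) :=
      Finset.prod_congr rfl fun i _ => by ring
    have hU1 : ∏ i ∈ Finset.range nn, ((k : ℝ) + ((b : ℝ) - i))
        = ∏ i ∈ Finset.range nn, (((k + b : ℕ) : ℝ) - i) :=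
      Finset.prod_congr rfl fun i _ => by push_cast; ring
    have hV1 : ∏ i ∈ Finset.range nn, ((k : ℝ) + -(i : ℝ))
        = ∏ i ∈ Finset.range nn, ((k : ℝ) - i) :=
      Finset.prod_congr rfl fun i _ => by ring
    have hpos1 : 0 < ∏ i ∈ Finset.range b, ((k : ℝ) + 2 * h + i) :=
      Finset.prod_pos fun i _ => by positivity
    have hpos2 : 0 < ∏ i ∈ Finset.range b, ((k : ℝ) - nn + 2 * h + i) := by
      refine Finset.prod_pos fun i _ => ?_
      have h1 : (nn : ℝ) ≤ (k : ℝ) := Nat.cast_le.mpr hnk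
      have h2 : (0 : ℝ) ≤ (i : ℝ) := Nat.cast_nonneg i
      linarith
    have hpos3 : 0 < ∏ i ∈ Finset.range d, ((k : ℝ) + 2 * h + i) :=
      Finset.prod_pos fun i _ => by positivity
    rw [hP1, hP2, hP3, hU1, hV1]
    simp only [cBl, cL_eq h nn (k + b) (by omega), cL_eq h nn k hnk, hkk]
    rw [eq_div_iff (by positivity)]
    push_cast
    field_simp [hpos1.ne', hpos2.ne', hpos3.ne']
    try ring
  have hwK : ∀ k : ℕ, nn + b + d + 2 ≤ k →
      w h (k + b - nn) / w h k
        = lpr k (((List.range d).map fun i : ℕ => (1 : ℝ) + i)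
            ++ ((List.range d).map fun i : ℕ => 2 * h + i)) / lpr k [] := by
    intro k hk
    rw [show k + b - nn = k + d by omega]
    exact hw_up h hpos d k
  obtain ⟨C, K, hC, hbound⟩ := master h (cBl h nn b d) (fun k => k + b - nn)
    u v Eℓ den _ [] (nn + b + d + 2)
    (by simp [hu]; omega) (by simp [hu, hv]) (by simp [hu, hE]; omega)
    (by simp [hu, hden]; omega) hc hwK
  exact engine B h hpos hB_smull hB_smulr hB_diag _ _ _ hT C hC K hbound


def cCg (h : ℝ) (a m d : ℕ) (k : ℕ) : ℝ :=
  (k.descFactorial m : ℝ)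
      * ((((k - m : ℕ) : ℝ) + ((a : ℝ) + 1) * h)
        / ∏ i ∈ Finset.range a, (((k - m : ℕ) : ℝ) + 2 * h + i))
  - (((k : ℝ) + ((a : ℝ) + 1) * h) / ∏ i ∈ Finset.range a, ((k : ℝ) + 2 * h + i))
      * ((k + a).descFactorial m : ℝ)
  + m * (k.descFactorial d : ℝ)

lemma caseCg_hT (h : ℝ) (L : ℤ → E)
    (hLneg : ∀ k : ℕ, 1 ≤ k → ∀ n : ℕ,
      L (-(k : ℤ)) (X ^ n) =
        (((n : ℂ) + ((k : ℂ) + 1) * (h : ℂ)) /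
            ∏ i ∈ Finset.range k, ((n : ℂ) + 2 * h + (i : ℂ))) • X ^ (n + k))
    (a d : ℕ) (ha : 1 ≤ a) (k : ℕ) :
    (opComm (L (-(a : ℤ))) (Dop ^ (a + d)) + (((a + d : ℕ) : ℂ)) • (Dop ^ d : E))
        ((X : Polynomial ℂ) ^ k)
      = ((cCg h a (a + d) d k : ℝ) : ℂ) • (X : Polynomial ℂ) ^ (k + a - (a + d)) := by
  rw [LinearMap.add_apply, LinearMap.smul_apply, opComm, LinearMap.sub_apply,
    Module.End.mul_apply, Module.End.mul_apply,
    Dpow_apply (a + d) k, Lneg_apply h L hLneg a ha k, map_smul, map_smul,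
    Lneg_apply h L hLneg a ha (k - (a + d)), Dpow_apply (a + d) (k + a),
    Dpow_apply d k, smul_smul, smul_smul, smul_smul]
  rw [show k - d = k + a - (a + d) by omega]
  by_cases hk : a + d ≤ k
  · rw [show k - (a + d) + a = k + a - (a + d) by omega, ← sub_smul, ← add_smul]
    congr 1
    simp only [cCg]
    push_cast
    ring
  · have h0 : k.descFactorial (a + d) = 0 := Nat.descFactorial_eq_zero_iff_lt.mpr (by omega)
    rw [h0]
    simp only [Nat.cast_zero, zero_mul, zero_smul, sub_zero, zero_sub]
    rw [← neg_smul, ← add_smul]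
    congr 1
    simp only [cCg, h0]
    push_cast
    ring

lemma caseCg (h : ℝ) (hpos : 0 < h)
    (L : ℤ → E)
    (hLneg : ∀ k : ℕ, 1 ≤ k → ∀ n : ℕ,
      L (-(k : ℤ)) (X ^ n) =
        (((n : ℂ) + ((k : ℂ) + 1) * (h : ℂ)) /
            ∏ i ∈ Finset.range k, ((n : ℂ) + 2 * h + (i : ℂ))) • X ^ (n + k))
    (B : Polynomial ℂ → Polynomial ℂ → ℂ)
    (hB_smull : ∀ (a : ℂ) (p q : Polynomial ℂ), B (a • p) q = a * B p q)
    (hB_smulr : ∀ (a : ℂ) (p q : Polynomial ℂ), B p (a • q) = (starRingEnd ℂ) a * B p q)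
    (hB_diag : ∀ n : ℕ, B (X ^ n) (X ^ n) = ((w h n : ℝ) : ℂ))
    (a d : ℕ) (ha : 1 ≤ a) :
    Summable (fun k : ℕ =>
      (B (((opComm (L (-(a : ℤ))) (Dop ^ (a + d)) + (((a + d : ℕ) : ℂ)) • (Dop ^ d : E))) (X ^ k))
         (((opComm (L (-(a : ℤ))) (Dop ^ (a + d)) + (((a + d : ℕ) : ℂ)) • (Dop ^ d : E))) (X ^ k))).re /
        (B (X ^ k) (X ^ k)).re) := by
  set m : ℕ := a + d with hm
  have hT : ∀ k : ℕ,
      ((opComm (L (-(a : ℤ))) (Dop ^ (a + d)) + (((a + d : ℕ) : ℂ)) • (Dop ^ d : E)))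
          ((X : Polynomial ℂ) ^ k)
        = ((cCg h a m d k : ℝ) : ℂ) • (X : Polynomial ℂ) ^ (k + a - m) :=
    fun k => caseCg_hT h L hLneg a d ha k
  set u : List ℝ := (((List.range m).map fun i : ℕ => -(i : ℝ))
      ++ [-(m : ℝ) + ((a : ℝ) + 1) * h])
      ++ ((List.range a).map fun i : ℕ => 2 * h + i) with hu
  set v : List ℝ := (((List.range m).map fun i : ℕ => (a : ℝ) - i)
      ++ [((a : ℝ) + 1) * h])
      ++ ((List.range a).map fun i : ℕ => 2 * h + i - m) with hv
  set Eℓ : List ℝ := (((List.range d).map fun i : ℕ => -(i : ℝ))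
      ++ ((List.range a).map fun i : ℕ => 2 * h + i))
      ++ ((List.range a).map fun i : ℕ => 2 * h + i - m) with hE
  set den : List ℝ := ((List.range a).map fun i : ℕ => 2 * h + i - m)
      ++ ((List.range a).map fun i : ℕ => 2 * h + i) with hden
  have hsum : u.sum - v.sum = -(m : ℝ) := by
    simp only [hu, hv, List.sum_append, sum_range_list, List.sum_cons, List.sum_nil]
    rw [show ∑ i ∈ Finset.range m, ((a : ℝ) - i) = ∑ i ∈ Finset.range m, (-(i : ℝ) + a) from
      Finset.sum_congr rfl fun i _ => by ring]
    rw [show ∑ i ∈ Finset.range a, (2 * h + (i : ℝ) - m)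
        = ∑ i ∈ Finset.range a, ((2 * h + i) + (-(m : ℝ))) from
      Finset.sum_congr rfl fun i _ => by ring]
    rw [sum_affine, sum_affine]
    ring
  have hc : ∀ k : ℕ, a + m + d + 2 ≤ k →
      cCg h a m d k = (lpr k u - lpr k v - (u.sum - v.sum) * lpr k Eℓ) / lpr k den := by
    intro k hk
    rw [hsum]
    simp only [hu, hv, hE, hden, lpr_append, lpr_range, lpr_cons, lpr_nil, mul_one]
    have hmk : m ≤ k := by omega
    have hdk : d ≤ k := by omega
    have hkk : ((k - m : ℕ) : ℝ) = (k : ℝ) - m := Nat.cast_sub hmk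
    have hP1 : ∏ i ∈ Finset.range a, ((k : ℝ) + (2 * h + i))
        = ∏ i ∈ Finset.range a, ((k : ℝ) + 2 * h + i) :=
      Finset.prod_congr rfl fun i _ => by ring
    have hP2 : ∏ i ∈ Finset.range a, ((k : ℝ) + (2 * h + i - m))
        = ∏ i ∈ Finset.range a, ((k : ℝ) - m + 2 * h + i) :=
      Finset.prod_congr rfl fun i _ => by ring
    have hU1 : ∏ i ∈ Finset.range m, ((k : ℝ) + -(i : ℝ)) = ((k.descFactorial m : ℝ)) := by
      rw [dF_cast m k hmk]
      exact Finset.prod_congr rfl fun i _ => by ring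
    have hV1 : ∏ i ∈ Finset.range m, ((k : ℝ) + ((a : ℝ) - i)) = (((k + a).descFactorial m : ℝ)) := by
      rw [dF_cast m (k + a) (by omega)]
      refine Finset.prod_congr rfl fun i _ => ?_
      push_cast
      ring
    have hE1 : ∏ i ∈ Finset.range d, ((k : ℝ) + -(i : ℝ)) = ((k.descFactorial d : ℝ)) := by
      rw [dF_cast d k hdk]
      exact Finset.prod_congr rfl fun i _ => by ring
    have hpos1 : 0 < ∏ i ∈ Finset.range a, ((k : ℝ) + 2 * h + i) :=
      Finset.prod_pos fun i _ => by positivity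
    have hpos2 : 0 < ∏ i ∈ Finset.range a, ((k : ℝ) - m + 2 * h + i) := by
      refine Finset.prod_pos fun i _ => ?_
      have h1 : (m : ℝ) ≤ (k : ℝ) := Nat.cast_le.mpr hmk
      have h2 : (0 : ℝ) ≤ (i : ℝ) := Nat.cast_nonneg i
      linarith
    rw [hP1, hP2, hU1, hV1, hE1]
    simp only [cCg, hkk]
    rw [eq_div_iff (mul_pos hpos2 hpos1).ne']
    push_cast
    generalize ∏ i ∈ Finset.range a, ((k : ℝ) - m + 2 * h + i) = P at hpos2 ⊢
    generalize ∏ i ∈ Finset.range a, ((k : ℝ) + 2 * h + i) = Q at hpos1 ⊢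
    field_simp [hpos1.ne', hpos2.ne']
    try ring
  have hwK : ∀ k : ℕ, a + m + d + 2 ≤ k →
      w h (k + a - m) / w h k
        = lpr k [] / lpr k (((List.range d).map fun i : ℕ => (1 : ℝ) + i - d)
            ++ ((List.range d).map fun i : ℕ => 2 * h + i - d)) := by
    intro k hk
    rw [show k + a - m = k - d by omega]
    exact hw_down h hpos d k (by omega)
  obtain ⟨C, K, hC, hbound⟩ := master h (cCg h a m d) (fun k => k + a - m)
    u v Eℓ den [] _ (a + m + d + 2)
    (by simp [hu]; omega) (by simp [hu, hv]) (by simp [hu, hE]; omega)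
    (by simp [hu, hden]; omega) hc hwK
  exact engine B h hpos hB_smull hB_smulr hB_diag _ _ _ hT C hC K hbound


def cCl (h : ℝ) (a m d : ℕ) (k : ℕ) : ℝ :=
  (k.descFactorial m : ℝ)
      * ((((k - m : ℕ) : ℝ) + ((a : ℝ) + 1) * h)
        / ∏ i ∈ Finset.range a, (((k - m : ℕ) : ℝ) + 2 * h + i))
  - (((k : ℝ) + ((a : ℝ) + 1) * h) / ∏ i ∈ Finset.range a, ((k : ℝ) + 2 * h + i))
      * ((k + a).descFactorial m : ℝ)
  + m * (∏ i ∈ Finset.range d, ((k : ℝ) + 2 * h + i))⁻¹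

lemma caseCl_hT (h : ℝ) (F : E)
    (hF : ∀ n : ℕ, F ((X : Polynomial ℂ) ^ n) = (((n : ℂ) + 2 * h)⁻¹) • X ^ (n + 1))
    (L : ℤ → E)
    (hLneg : ∀ k : ℕ, 1 ≤ k → ∀ n : ℕ,
      L (-(k : ℤ)) (X ^ n) =
        (((n : ℂ) + ((k : ℂ) + 1) * (h : ℂ)) /
            ∏ i ∈ Finset.range k, ((n : ℂ) + 2 * h + (i : ℂ))) • X ^ (n + k))
    (m d : ℕ) (hmd : 1 ≤ m + d) (k : ℕ) :
    (opComm (L (-((m + d : ℕ) : ℤ))) (Dop ^ m) + ((m : ℂ)) • (F ^ d : E))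
        ((X : Polynomial ℂ) ^ k)
      = ((cCl h (m + d) m d k : ℝ) : ℂ) • (X : Polynomial ℂ) ^ (k + (m + d) - m) := by
  rw [LinearMap.add_apply, LinearMap.smul_apply, opComm, LinearMap.sub_apply,
    Module.End.mul_apply, Module.End.mul_apply,
    Dpow_apply m k, Lneg_apply h L hLneg (m + d) hmd k, map_smul, map_smul,
    Lneg_apply h L hLneg (m + d) hmd (k - m), Dpow_apply m (k + (m + d)),
    Fpow_apply h F hF d k, smul_smul, smul_smul, smul_smul]
  rw [show k + d = k + (m + d) - m by omega]
  by_cases hk : m ≤ k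
  · rw [show k - m + (m + d) = k + (m + d) - m by omega, ← sub_smul, ← add_smul]
    congr 1
    simp only [cCl]
    push_cast
    ring
  · have h0 : k.descFactorial m = 0 := Nat.descFactorial_eq_zero_iff_lt.mpr (by omega)
    rw [h0]
    simp only [Nat.cast_zero, zero_mul, zero_smul, zero_sub]
    rw [← neg_smul, ← add_smul]
    congr 1
    simp only [cCl, h0]
    push_cast
    ring

lemma caseCl (h : ℝ) (hpos : 0 < h) (F : E)
    (hF : ∀ n : ℕ, F ((X : Polynomial ℂ) ^ n) = (((n : ℂ) + 2 * h)⁻¹) • X ^ (n + 1))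
    (L : ℤ → E)
    (hLneg : ∀ k : ℕ, 1 ≤ k → ∀ n : ℕ,
      L (-(k : ℤ)) (X ^ n) =
        (((n : ℂ) + ((k : ℂ) + 1) * (h : ℂ)) /
            ∏ i ∈ Finset.range k, ((n : ℂ) + 2 * h + (i : ℂ))) • X ^ (n + k))
    (B : Polynomial ℂ → Polynomial ℂ → ℂ)
    (hB_smull : ∀ (a : ℂ) (p q : Polynomial ℂ), B (a • p) q = a * B p q)
    (hB_smulr : ∀ (a : ℂ) (p q : Polynomial ℂ), B p (a • q) = (starRingEnd ℂ) a * B p q)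
    (hB_diag : ∀ n : ℕ, B (X ^ n) (X ^ n) = ((w h n : ℝ) : ℂ))
    (m d : ℕ) (hd : 1 ≤ d) :
    Summable (fun k : ℕ =>
      (B (((opComm (L (-((m + d : ℕ) : ℤ))) (Dop ^ m) + ((m : ℂ)) • (F ^ d : E))) (X ^ k))
         (((opComm (L (-((m + d : ℕ) : ℤ))) (Dop ^ m) + ((m : ℂ)) • (F ^ d : E))) (X ^ k))).re /
        (B (X ^ k) (X ^ k)).re) := by
  set a : ℕ := m + d with hadef
  have hT : ∀ k : ℕ,
      ((opComm (L (-((m + d : ℕ) : ℤ))) (Dop ^ m) + ((m : ℂ)) • (F ^ d : E)))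
          ((X : Polynomial ℂ) ^ k)
        = ((cCl h a m d k : ℝ) : ℂ) • (X : Polynomial ℂ) ^ (k + a - m) :=
    fun k => caseCl_hT h F hF L hLneg m d (by omega) k
  set u : List ℝ := ((((List.range m).map fun i : ℕ => -(i : ℝ))
      ++ [-(m : ℝ) + ((a : ℝ) + 1) * h])
      ++ ((List.range a).map fun i : ℕ => 2 * h + i))
      ++ ((List.range d).map fun i : ℕ => 2 * h + i) with hu
  set v : List ℝ := ((((List.range m).map fun i : ℕ => (a : ℝ) - i)
      ++ [((a : ℝ) + 1) * h])
      ++ ((List.range a).map fun i : ℕ => 2 * h + i - m))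
      ++ ((List.range d).map fun i : ℕ => 2 * h + i) with hv
  set Eℓ : List ℝ := ((List.range a).map fun i : ℕ => 2 * h + i)
      ++ ((List.range a).map fun i : ℕ => 2 * h + i - m) with hE
  set den : List ℝ := (((List.range a).map fun i : ℕ => 2 * h + i - m)
      ++ ((List.range a).map fun i : ℕ => 2 * h + i))
      ++ ((List.range d).map fun i : ℕ => 2 * h + i) with hden
  have hsum : u.sum - v.sum = -(m : ℝ) := by
    simp only [hu, hv, List.sum_append, sum_range_list, List.sum_cons, List.sum_nil]
    rw [show ∑ i ∈ Finset.range m, ((a : ℝ) - i) = ∑ i ∈ Finset.range m, (-(i : ℝ) + a) from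
      Finset.sum_congr rfl fun i _ => by ring]
    rw [show ∑ i ∈ Finset.range a, (2 * h + (i : ℝ) - m)
        = ∑ i ∈ Finset.range a, ((2 * h + i) + (-(m : ℝ))) from
      Finset.sum_congr rfl fun i _ => by ring]
    rw [sum_affine, sum_affine]
    ring
  have hc : ∀ k : ℕ, a + m + d + 2 ≤ k →
      cCl h a m d k = (lpr k u - lpr k v - (u.sum - v.sum) * lpr k Eℓ) / lpr k den := by
    intro k hk
    rw [hsum]
    simp only [hu, hv, hE, hden, lpr_append, lpr_range, lpr_cons, lpr_nil, mul_one]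
    have hmk : m ≤ k := by omega
    have hkk : ((k - m : ℕ) : ℝ) = (k : ℝ) - m := Nat.cast_sub hmk
    have hP1 : ∏ i ∈ Finset.range a, ((k : ℝ) + (2 * h + i))
        = ∏ i ∈ Finset.range a, ((k : ℝ) + 2 * h + i) :=
      Finset.prod_congr rfl fun i _ => by ring
    have hP2 : ∏ i ∈ Finset.range a, ((k : ℝ) + (2 * h + i - m))
        = ∏ i ∈ Finset.range a, ((k : ℝ) - m + 2 * h + i) :=
      Finset.prod_congr rfl fun i _ => by ring
    have hP3 : ∏ i ∈ Finset.range d, ((k : ℝ) + (2 * h + i))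
        = ∏ i ∈ Finset.range d, ((k : ℝ) + 2 * h + i) :=
      Finset.prod_congr rfl fun i _ => by ring
    have hU1 : ∏ i ∈ Finset.range m, ((k : ℝ) + -(i : ℝ)) = ((k.descFactorial m : ℝ)) := by
      rw [dF_cast m k hmk]
      exact Finset.prod_congr rfl fun i _ => by ring
    have hV1 : ∏ i ∈ Finset.range m, ((k : ℝ) + ((a : ℝ) - i)) = (((k + a).descFactorial m : ℝ)) := by
      rw [dF_cast m (k + a) (by omega)]
      refine Finset.prod_congr rfl fun i _ => ?_
      push_cast
      ring
    have hpos1 : 0 < ∏ i ∈ Finset.range a, ((k : ℝ) + 2 * h + i) :=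
      Finset.prod_pos fun i _ => by positivity
    have hpos2 : 0 < ∏ i ∈ Finset.range a, ((k : ℝ) - m + 2 * h + i) := by
      refine Finset.prod_pos fun i _ => ?_
      have h1 : (m : ℝ) ≤ (k : ℝ) := Nat.cast_le.mpr hmk
      have h2 : (0 : ℝ) ≤ (i : ℝ) := Nat.cast_nonneg i
      linarith
    have hpos3 : 0 < ∏ i ∈ Finset.range d, ((k : ℝ) + 2 * h + i) :=
      Finset.prod_pos fun i _ => by positivity
    rw [hP1, hP2, hP3, hU1, hV1]
    simp only [cCl, hkk]
    rw [eq_div_iff (by positivity)]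
    push_cast
    generalize ∏ i ∈ Finset.range a, ((k : ℝ) - m + 2 * h + i) = P at hpos2 ⊢
    generalize ∏ i ∈ Finset.range a, ((k : ℝ) + 2 * h + i) = Q at hpos1 ⊢
    generalize ∏ i ∈ Finset.range d, ((k : ℝ) + 2 * h + i) = R at hpos3 ⊢
    field_simp [hpos1.ne', hpos2.ne', hpos3.ne']
    try ring
  have hwK : ∀ k : ℕ, a + m + d + 2 ≤ k →
      w h (k + a - m) / w h k
        = lpr k (((List.range d).map fun i : ℕ => (1 : ℝ) + i)
            ++ ((List.range d).map fun i : ℕ => 2 * h + i)) / lpr k [] := by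
    intro k hk
    rw [show k + a - m = k + d by omega]
    exact hw_up h hpos d k
  obtain ⟨C, K, hC, hbound⟩ := master h (cCl h a m d) (fun k => k + a - m)
    u v Eℓ den _ [] (a + m + d + 2)
    (by simp [hu]; omega) (by simp [hu, hv]) (by simp [hu, hE]; omega)
    (by simp [hu, hden]; omega) hc hwK
  exact engine B h hpos hB_smull hB_smulr hB_diag _ _ _ hT C hC K hbound


lemma opComm_pow_pow (A : E) (a b : ℕ) : opComm (A ^ a) (A ^ b) = 0 := by
  rw [opComm, ← pow_add, ← pow_add, add_comm, sub_self]

lemma opComm_one (A : E) : opComm A 1 = 0 := by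
  rw [opComm, mul_one, one_mul, sub_self]

lemma opComm_one' (A : E) : opComm 1 A = 0 := by
  rw [opComm, mul_one, one_mul, sub_self]

lemma DMz : Dop * Mz = Mz * Dop + (1 : E) := by
  apply LinearMap.ext
  intro p
  simp only [Module.End.mul_apply, LinearMap.add_apply, Module.End.one_apply, Dop, Mz,
    LinearMap.mulLeft_apply]
  rw [Polynomial.derivative_mul, Polynomial.derivative_X, one_mul]
  ring

lemma DpowMz (a : ℕ) :
    Dop ^ (a + 1) * Mz = Mz * Dop ^ (a + 1) + ((a : ℂ) + 1) • (Dop ^ a : E) := by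
  induction a with
  | zero => simpa using DMz
  | succ a ih =>
      have h1 : Dop ^ (a + 2) * Mz = Dop * (Dop ^ (a + 1) * Mz) := by
        rw [← mul_assoc, ← pow_succ']
      rw [h1, ih, mul_add, ← mul_assoc, DMz, add_mul, one_mul, mul_assoc, ← pow_succ',
        mul_smul_comm, ← pow_succ']
      push_cast
      rw [show ((a : ℂ) + 1 + 1) • (Dop ^ (a + 1) : E)
          = ((a : ℂ) + 1) • (Dop ^ (a + 1) : E) + Dop ^ (a + 1) by
        rw [add_smul, one_smul]]
      abel

lemma Z3op (h : ℝ) (L : ℤ → E)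
    (hLpos : ∀ k : ℕ, L (k : ℤ) = Mz * Dop ^ (k + 1) + (((k : ℂ) + 1) * (h : ℂ)) • Dop ^ k)
    (nn a : ℕ) :
    opComm (L (nn : ℤ)) (Dop ^ (a + 1)) + ((a : ℂ) + 1) • (Dop ^ (nn + (a + 1)) : E) = 0 := by
  rw [hLpos nn, opComm]
  have h1 : (Mz * Dop ^ (nn + 1) + (((nn : ℂ) + 1) * (h : ℂ)) • Dop ^ nn) * Dop ^ (a + 1)
      = Mz * Dop ^ (nn + 1 + (a + 1))
        + (((nn : ℂ) + 1) * (h : ℂ)) • (Dop ^ (nn + (a + 1)) : E) := by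
    rw [add_mul, smul_mul_assoc, mul_assoc, ← pow_add, ← pow_add]
  have h2 : Dop ^ (a + 1) * (Mz * Dop ^ (nn + 1) + (((nn : ℂ) + 1) * (h : ℂ)) • Dop ^ nn)
      = Mz * Dop ^ (nn + 1 + (a + 1)) + ((a : ℂ) + 1) • (Dop ^ (nn + (a + 1)) : E)
        + (((nn : ℂ) + 1) * (h : ℂ)) • (Dop ^ (nn + (a + 1)) : E) := by
    rw [mul_add, mul_smul_comm, ← pow_add, ← mul_assoc, DpowMz a, add_mul, smul_mul_assoc,
      mul_assoc, ← pow_add, ← pow_add,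
      show a + 1 + (nn + 1) = nn + 1 + (a + 1) by omega,
      show a + (nn + 1) = nn + (a + 1) by omega,
      show a + 1 + nn = nn + (a + 1) by omega]
  rw [h1, h2]
  abel

def cZ6 (h : ℝ) (a b : ℕ) (k : ℕ) : ℝ :=
  (∏ i ∈ Finset.range b, ((k : ℝ) + 2 * h + i))⁻¹
      * ((((k + b : ℕ) : ℝ) + ((a : ℝ) + 1) * h)
        / ∏ i ∈ Finset.range a, (((k + b : ℕ) : ℝ) + 2 * h + i))
  - (((k : ℝ) + ((a : ℝ) + 1) * h) / ∏ i ∈ Finset.range a, ((k : ℝ) + 2 * h + i))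
      * (∏ i ∈ Finset.range b, (((k + a : ℕ) : ℝ) + 2 * h + i))⁻¹
  - b * (∏ i ∈ Finset.range (a + b), ((k : ℝ) + 2 * h + i))⁻¹

lemma Z6_hT (h : ℝ) (F : E)
    (hF : ∀ n : ℕ, F ((X : Polynomial ℂ) ^ n) = (((n : ℂ) + 2 * h)⁻¹) • X ^ (n + 1))
    (L : ℤ → E)
    (hLneg : ∀ k : ℕ, 1 ≤ k → ∀ n : ℕ,
      L (-(k : ℤ)) (X ^ n) =
        (((n : ℂ) + ((k : ℂ) + 1) * (h : ℂ)) /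
            ∏ i ∈ Finset.range k, ((n : ℂ) + 2 * h + (i : ℂ))) • X ^ (n + k))
    (a b : ℕ) (ha : 1 ≤ a) (k : ℕ) :
    (opComm (L (-(a : ℤ))) (F ^ b) + (-(b : ℂ)) • (F ^ (a + b) : E)) ((X : Polynomial ℂ) ^ k)
      = ((cZ6 h a b k : ℝ) : ℂ) • (X : Polynomial ℂ) ^ (k + b + a) := by
  rw [LinearMap.add_apply, LinearMap.smul_apply, opComm, LinearMap.sub_apply,
    Module.End.mul_apply, Module.End.mul_apply,
    Fpow_apply h F hF b k, Lneg_apply h L hLneg a ha k, map_smul, map_smul,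
    Lneg_apply h L hLneg a ha (k + b), Fpow_apply h F hF b (k + a),
    Fpow_apply h F hF (a + b) k, smul_smul, smul_smul, smul_smul]
  rw [show k + a + b = k + b + a by omega, show k + (a + b) = k + b + a by omega,
    ← sub_smul, ← add_smul]
  congr 1
  simp only [cZ6]
  push_cast
  ring

lemma cZ6_zero (h : ℝ) (hpos : 0 < h) (a b : ℕ) (k : ℕ) : cZ6 h a b k = 0 := by
  have hs1 : ∏ i ∈ Finset.range (a + b), ((k : ℝ) + 2 * h + i)
      = (∏ i ∈ Finset.range b, ((k : ℝ) + 2 * h + i))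
        * ∏ i ∈ Finset.range a, ((k : ℝ) + b + 2 * h + i) := by
    rw [show a + b = b + a by omega, Finset.prod_range_add]
    congr 1
    refine Finset.prod_congr rfl fun i _ => ?_
    push_cast
    ring
  have hs2 : ∏ i ∈ Finset.range (a + b), ((k : ℝ) + 2 * h + i)
      = (∏ i ∈ Finset.range a, ((k : ℝ) + 2 * h + i))
        * ∏ i ∈ Finset.range b, ((k : ℝ) + a + 2 * h + i) := by
    rw [Finset.prod_range_add]
    congr 1
    refine Finset.prod_congr rfl fun i _ => ?_
    push_cast
    ring
  have hkey : (∏ i ∈ Finset.range a, ((k : ℝ) + 2 * h + i))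
        * ∏ i ∈ Finset.range b, ((k : ℝ) + a + 2 * h + i)
      = (∏ i ∈ Finset.range b, ((k : ℝ) + 2 * h + i))
        * ∏ i ∈ Finset.range a, ((k : ℝ) + b + 2 * h + i) := hs2.symm.trans hs1
  have hpos1 : 0 < ∏ i ∈ Finset.range b, ((k : ℝ) + 2 * h + i) :=
    Finset.prod_pos fun i _ => by positivity
  have hpos2 : 0 < ∏ i ∈ Finset.range a, ((k : ℝ) + b + 2 * h + i) :=
    Finset.prod_pos fun i _ => by positivity
  have hpos3 : 0 < ∏ i ∈ Finset.range a, ((k : ℝ) + 2 * h + i) :=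
    Finset.prod_pos fun i _ => by positivity
  have hpos4 : 0 < ∏ i ∈ Finset.range b, ((k : ℝ) + a + 2 * h + i) :=
    Finset.prod_pos fun i _ => by positivity
  have hcb : (((k + b : ℕ) : ℝ)) = (k : ℝ) + b := by push_cast; ring
  have hca : (((k + a : ℕ) : ℝ)) = (k : ℝ) + a := by push_cast; ring
  have hQ1 : ∏ i ∈ Finset.range a, (((k + b : ℕ) : ℝ) + 2 * h + i)
      = ∏ i ∈ Finset.range a, ((k : ℝ) + b + 2 * h + i) :=
    Finset.prod_congr rfl fun i _ => by rw [hcb]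
  have hQ2 : ∏ i ∈ Finset.range b, (((k + a : ℕ) : ℝ) + 2 * h + i)
      = ∏ i ∈ Finset.range b, ((k : ℝ) + a + 2 * h + i) :=
    Finset.prod_congr rfl fun i _ => by rw [hca]
  simp only [cZ6, hcb, hQ1, hQ2, hs1]
  generalize ∏ i ∈ Finset.range b, ((k : ℝ) + 2 * h + i) = P1 at hpos1 hkey ⊢
  generalize ∏ i ∈ Finset.range a, ((k : ℝ) + b + 2 * h + i) = P2 at hpos2 hkey ⊢
  generalize ∏ i ∈ Finset.range a, ((k : ℝ) + 2 * h + i) = P3 at hpos3 hkey ⊢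
  generalize ∏ i ∈ Finset.range b, ((k : ℝ) + a + 2 * h + i) = P4 at hpos4 hkey ⊢
  obtain rfl : P4 = P1 * P2 / P3 := by rw [eq_div_iff hpos3.ne', ← hkey]; ring
  field_simp
  ring


end Stmt13

open Stmt13 in
/-- For `h > 0`, adjoining the tensor operators `Jₘ` to the q_R-conformal
symmetries gives an HS-projective representation of the semidirect sum of the Witt algebra
with the ℤ-graded Heisenberg algebra: for all `n, m ∈ ℤ`, both defect operators
`[Jₙ, Jₘ]` and `[Lₙ, Jₘ] + m·J_{n+m}` are Hilbert–Schmidt w.r.t. the orthogonal monomial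
basis. -/
theorem stmt_13 (h : ℝ) (hpos : 0 < h)
    (F : E) (hF : ∀ n : ℕ, F (X ^ n) = (((n : ℂ) + 2 * h)⁻¹) • X ^ (n + 1))
    (J : ℤ → E)
    (hJ0 : J 0 = 1)
    (hJpos : ∀ m : ℕ, 1 ≤ m → J (m : ℤ) = Dop ^ m)
    (hJneg : ∀ m : ℕ, 1 ≤ m → J (-(m : ℤ)) = F ^ m)
    (L : ℤ → E)
    (hLpos : ∀ k : ℕ, L (k : ℤ) = Mz * Dop ^ (k + 1) + (((k : ℂ) + 1) * (h : ℂ)) • Dop ^ k)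
    (hLneg : ∀ k : ℕ, 1 ≤ k → ∀ n : ℕ,
      L (-(k : ℤ)) (X ^ n) =
        (((n : ℂ) + ((k : ℂ) + 1) * (h : ℂ)) /
            ∏ i ∈ Finset.range k, ((n : ℂ) + 2 * h + (i : ℂ))) • X ^ (n + k))
    (B : Polynomial ℂ → Polynomial ℂ → ℂ)
    (hB_addl : ∀ p q r : Polynomial ℂ, B (p + q) r = B p r + B q r)
    (hB_smull : ∀ (a : ℂ) (p q : Polynomial ℂ), B (a • p) q = a * B p q)
    (hB_addr : ∀ p q r : Polynomial ℂ, B p (q + r) = B p q + B p r)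
    (hB_smulr : ∀ (a : ℂ) (p q : Polynomial ℂ), B p (a • q) = (starRingEnd ℂ) a * B p q)
    (hB_orth : ∀ m n : ℕ, m ≠ n → B (X ^ m) (X ^ n) = 0)
    (hB_diag : ∀ n : ℕ, B (X ^ n) (X ^ n) = ((w h n : ℝ) : ℂ))
    :
    ∀ n m : ℤ,
      Summable (fun k : ℕ =>
        (B ((opComm (J n) (J m)) (X ^ k)) ((opComm (J n) (J m)) (X ^ k))).re /
          (B (X ^ k) (X ^ k)).re) ∧
      Summable (fun k : ℕ =>
        (B ((opComm (L n) (J m) + (m : ℂ) • J (n + m)) (X ^ k))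
           ((opComm (L n) (J m) + (m : ℂ) • J (n + m)) (X ^ k))).re /
          (B (X ^ k) (X ^ k)).re) := by
  have Jnat : ∀ c : ℕ, J (c : ℤ) = Dop ^ c := by
    intro c
    cases c with
    | zero => simpa using hJ0
    | succ c => exact hJpos (c + 1) (by omega)
  have Jneg : ∀ c : ℕ, J (-(c : ℤ)) = F ^ c := by
    intro c
    cases c with
    | zero => simpa using hJ0
    | succ c => exact hJneg (c + 1) (by omega)
  intro n m
  have hcn : (∃ nn : ℕ, n = (nn : ℤ)) ∨ (∃ na : ℕ, 1 ≤ na ∧ n = -(na : ℤ)) := by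
    obtain ⟨c, hc | hc⟩ := Int.eq_nat_or_neg n
    · exact Or.inl ⟨c, hc⟩
    · rcases Nat.eq_zero_or_pos c with rfl | hcpos
      · exact Or.inl ⟨0, by simpa using hc⟩
      · exact Or.inr ⟨c, hcpos, hc⟩
  have hcm : (∃ mm : ℕ, m = (mm : ℤ)) ∨ (∃ mb : ℕ, 1 ≤ mb ∧ m = -(mb : ℤ)) := by
    obtain ⟨c, hc | hc⟩ := Int.eq_nat_or_neg m
    · exact Or.inl ⟨c, hc⟩
    · rcases Nat.eq_zero_or_pos c with rfl | hcpos
      · exact Or.inl ⟨0, by simpa using hc⟩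
      · exact Or.inr ⟨c, hcpos, hc⟩
  constructor
  · -- Part 1 : [J n, J m]
    rcases hcn with ⟨nn, rfl⟩ | ⟨na, hna, rfl⟩ <;> rcases hcm with ⟨mm, rfl⟩ | ⟨mb, hmb, rfl⟩
    · rw [Jnat nn, Jnat mm]
      exact engine0 B hB_smull _ (fun k => by rw [opComm_pow_pow]; simp)
    · rw [Jnat nn, Jneg mb]
      rcases Nat.eq_zero_or_pos nn with rfl | hnn
      · rw [pow_zero]
        exact engine0 B hB_smull _ (fun k => by rw [opComm_one']; simp)
      · exact caseA h hpos F hF B hB_smull hB_smulr hB_diag nn mb hnn hmb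
    · rw [Jneg na, Jnat mm]
      rcases Nat.eq_zero_or_pos mm with rfl | hmm
      · rw [pow_zero]
        exact engine0 B hB_smull _ (fun k => by rw [opComm_one]; simp)
      · have heq : (fun k : ℕ =>
            (B ((opComm (F ^ na) (Dop ^ mm)) (X ^ k)) ((opComm (F ^ na) (Dop ^ mm)) (X ^ k))).re
              / (B (X ^ k) (X ^ k)).re)
            = fun k : ℕ =>
            (B ((opComm (Dop ^ mm) (F ^ na)) (X ^ k)) ((opComm (Dop ^ mm) (F ^ na)) (X ^ k))).re
              / (B (X ^ k) (X ^ k)).re := by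
          funext k
          have hco : opComm (F ^ na) (Dop ^ mm) = -(opComm (Dop ^ mm) (F ^ na)) := by
            rw [opComm, opComm, neg_sub]
          rw [hco, LinearMap.neg_apply, B_neg B hB_smull hB_smulr]
        rw [heq]
        exact caseA h hpos F hF B hB_smull hB_smulr hB_diag mm na hmm hna
    · rw [Jneg na, Jneg mb]
      exact engine0 B hB_smull _ (fun k => by rw [opComm_pow_pow]; simp)
  · -- Part 2 : [L n, J m] + m • J (n+m)
    rcases hcm with ⟨mm, rfl⟩ | ⟨mb, hmb, rfl⟩
    · rcases Nat.eq_zero_or_pos mm with rfl | hmm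
      · -- m = 0
        simp only [Nat.cast_zero, Int.cast_zero, zero_smul, add_zero, hJ0]
        exact engine0 B hB_smull _ (fun k => by rw [opComm_one]; simp)
      · obtain ⟨a', rfl⟩ : ∃ a', mm = a' + 1 := ⟨mm - 1, by omega⟩
        rcases hcn with ⟨nn, rfl⟩ | ⟨na, hna, rfl⟩
        · -- n = nn ≥ 0, m = a'+1 : exact zero via Z3op
          rw [Jnat (a' + 1),
            show ((nn : ℤ) + ((a' + 1 : ℕ) : ℤ)) = (((nn + (a' + 1) : ℕ)) : ℤ) by push_cast; ring,
            Jnat (nn + (a' + 1)),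
            show ((((a' + 1 : ℕ) : ℤ)) : ℂ) = ((a' : ℂ) + 1) by push_cast; ring,
            Z3op h L hLpos nn a']
          exact engine0 B hB_smull _ (fun k => by simp)
        · -- n = -na, na ≥ 1, m = a'+1
          rcases le_or_gt na (a' + 1) with hle | hlt
          · obtain ⟨d, hd⟩ : ∃ d, a' + 1 = na + d := ⟨a' + 1 - na, by omega⟩
            rw [Jnat (a' + 1), hd,
              show (-(na : ℤ) + ((na + d : ℕ) : ℤ)) = ((d : ℕ) : ℤ) by push_cast; ring,
              Jnat d,
              show ((((na + d : ℕ) : ℤ)) : ℂ) = (((na + d : ℕ)) : ℂ) by push_cast; ring]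
            exact caseCg h hpos L hLneg B hB_smull hB_smulr hB_diag na d hna
          · obtain ⟨d, hd⟩ : ∃ d, na = (a' + 1) + d := ⟨na - (a' + 1), by omega⟩
            rw [Jnat (a' + 1), hd,
              show (-(((a' + 1) + d : ℕ) : ℤ) + ((a' + 1 : ℕ) : ℤ)) = -((d : ℕ) : ℤ) by
                push_cast; ring,
              Jneg d,
              show ((((a' + 1 : ℕ) : ℤ)) : ℂ) = (((a' + 1 : ℕ)) : ℂ) by push_cast; ring]
            exact caseCl h hpos F hF L hLneg B hB_smull hB_smulr hB_diag (a' + 1) d (by omega)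
    · -- m = -mb, mb ≥ 1
      obtain ⟨b', rfl⟩ : ∃ b', mb = b' + 1 := ⟨mb - 1, by omega⟩
      rcases hcn with ⟨nn, rfl⟩ | ⟨na, hna, rfl⟩
      · rcases le_or_gt (b' + 1) nn with hle | hlt
        · obtain ⟨d, hd⟩ : ∃ d, nn = (b' + 1) + d := ⟨nn - (b' + 1), by omega⟩
          rw [Jneg (b' + 1), hd,
            show ((((b' + 1) + d : ℕ) : ℤ) + -((b' + 1 : ℕ) : ℤ)) = ((d : ℕ) : ℤ) by
              push_cast; ring,
            Jnat d,
            show (Int.cast (-((b' + 1 : ℕ) : ℤ)) : ℂ) = -(((b' + 1 : ℕ)) : ℂ) by push_cast; ring]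
          exact caseBg h hpos F hF L hLpos B hB_smull hB_smulr hB_diag (b' + 1) d (by omega)
        · obtain ⟨d, hd⟩ : ∃ d, b' + 1 = nn + d := ⟨b' + 1 - nn, by omega⟩
          rw [Jneg (b' + 1), hd,
            show (((nn : ℕ) : ℤ) + -((nn + d : ℕ) : ℤ)) = -((d : ℕ) : ℤ) by push_cast; ring,
            Jneg d,
            show (Int.cast (-((nn + d : ℕ) : ℤ)) : ℂ) = -(((nn + d : ℕ)) : ℂ) by push_cast; ring]
          exact caseBl h hpos F hF L hLpos B hB_smull hB_smulr hB_diag nn d (by omega)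
      · -- n = -na, na ≥ 1, m = -(b'+1) : exact zero pointwise
        rw [Jneg (b' + 1),
          show ((-(na : ℤ)) + -((b' + 1 : ℕ) : ℤ)) = -(((na + (b' + 1) : ℕ)) : ℤ) by
            push_cast; ring,
          Jneg (na + (b' + 1)),
          show (Int.cast (-((b' + 1 : ℕ) : ℤ)) : ℂ) = -(((b' + 1 : ℕ)) : ℂ) by push_cast; ring]
        refine engine0 B hB_smull _ (fun k => ?_)
        rw [Z6_hT h F hF L hLneg na (b' + 1) hna k, cZ6_zero h hpos]
        simp


end
end

section
/- For h = 1 and for h = 1/2, the HS-projective representation of the Witt algebra by q_R-conformal symmetries is FR-projective: for all n, m ∈ ℤ, the defect operator [L_n, L_m] − (n − m)·L_{n+m} on ℂ[z] has finite rank, i.e. its range is a finite-dimensional subspace of ℂ[z]. -/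
open Polynomial

noncomputable section

lemma finrank_of_ev (T : E) (N₀ : ℕ) (hT : ∀ N, N₀ ≤ N → T (X ^ N) = 0) :
    FiniteDimensional ℂ (LinearMap.range T) := by
  have hfd : FiniteDimensional ℂ (Submodule.span ℂ ((fun i => T (X ^ i)) '' Set.Iio N₀)) :=
    FiniteDimensional.span_of_finite ℂ ((Set.finite_Iio N₀).image _)
  apply Submodule.finiteDimensional_of_le (S₂ := Submodule.span ℂ ((fun i => T (X ^ i)) '' Set.Iio N₀))
  rintro x ⟨p, rfl⟩
  induction p using Polynomial.induction_on' with
  | add p q hp hq => rw [map_add]; exact add_mem hp hq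
  | monomial i a =>
    rw [← smul_X_eq_monomial, map_smul]
    by_cases hi : i < N₀
    · exact Submodule.smul_mem _ _ (Submodule.subset_span ⟨i, hi, rfl⟩)
    · rw [hT i (le_of_not_gt hi), smul_zero]; exact Submodule.zero_mem _

lemma Dop_pow_apply (k N : ℕ) :
    (Dop ^ k) (X ^ N : Polynomial ℂ) = (N.descFactorial k : ℂ) • X ^ (N - k) := by
  induction k with
  | zero => simp
  | succ k ih =>
    rw [pow_succ', Module.End.mul_apply, ih, map_smul]
    show (N.descFactorial k : ℂ) • derivative (X ^ (N - k) : Polynomial ℂ) = _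
    rw [derivative_X_pow, Nat.descFactorial_succ]
    rw [← smul_eq_C_mul, smul_smul]
    push_cast
    rw [show N - (k+1) = N - k - 1 from rfl]
    ring_nf

lemma Lpos_apply (h : ℝ) (L : ℤ → E)
    (hLpos : ∀ k : ℕ, L (k : ℤ) = Mz * Dop ^ (k + 1) + (((k : ℂ) + 1) * (h : ℂ)) • Dop ^ k)
    (k N : ℕ) :
    L (k : ℤ) (X ^ N) =
      ((N.descFactorial (k+1) : ℂ) + ((k : ℂ) + 1) * (h : ℂ) * (N.descFactorial k : ℂ))
        • X ^ (N - k) := by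
  rw [hLpos k]
  rw [LinearMap.add_apply, LinearMap.smul_apply, Module.End.mul_apply, Dop_pow_apply,
    Dop_pow_apply, map_smul, add_smul]
  congr 1
  · show (N.descFactorial (k+1) : ℂ) • (X * X ^ (N - (k+1))) = _
    by_cases hk : k + 1 ≤ N
    · rw [← pow_succ']
      congr 2
      omega
    · rw [Nat.descFactorial_eq_zero_iff_lt.mpr (by omega)]
      simp
  · rw [smul_smul]


lemma key (L : ℤ → E) (c : ℤ → ℕ → ℂ)
    (hc : ∀ (j : ℤ) (N : ℕ), j ≤ (N:ℤ) → L j (X ^ N) = c j N • X ^ (((N:ℤ) - j).toNat))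
    (hid : ∀ (n m : ℤ) (N : ℕ), 2 * (n.natAbs + m.natAbs) ≤ N →
      c m N * c n (((N:ℤ) - m).toNat) - c n N * c m (((N:ℤ) - n).toNat)
        - ((n - m : ℤ) : ℂ) * c (n+m) N = 0)
    (n m : ℤ) :
    FiniteDimensional ℂ
      (LinearMap.range (opComm (L n) (L m) - ((n - m : ℤ) : ℂ) • L (n + m))) := by
  apply finrank_of_ev _ (2 * (n.natAbs + m.natAbs))
  intro N hN
  set A := ((N:ℤ) - m).toNat with hA
  set C := ((N:ℤ) - n).toNat with hC
  set B := ((N:ℤ) - (n+m)).toNat with hB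
  have e1 : L m (X ^ N) = c m N • X ^ A := hc m N (by omega)
  have e2 : L n (X ^ A) = c n A • X ^ B := by
    rw [hc n A (by omega), show (((A:ℕ):ℤ) - n).toNat = B by omega]
  have e3 : L n (X ^ N) = c n N • X ^ C := hc n N (by omega)
  have e4 : L m (X ^ C) = c m C • X ^ B := by
    rw [hc m C (by omega), show (((C:ℕ):ℤ) - m).toNat = B by omega]
  have e5 : L (n+m) (X ^ N) = c (n+m) N • X ^ B := hc (n+m) N (by omega)
  show (opComm (L n) (L m) - ((n - m : ℤ):ℂ) • L (n+m)) (X ^ N) = 0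
  rw [LinearMap.sub_apply, LinearMap.smul_apply, opComm, LinearMap.sub_apply,
    Module.End.mul_apply, Module.End.mul_apply, e1, e3, map_smul, map_smul, e2, e4, e5,
    smul_smul, smul_smul, smul_smul, ← sub_smul, ← sub_smul]
  have := hid n m N hN
  rw [← hA, ← hC] at this
  rw [this, zero_smul]

lemma prod_fact (N K : ℕ) :
    (N.factorial : ℂ) * ∏ i ∈ Finset.range K, ((N:ℂ) + 1 + i) = ((N + K).factorial : ℂ) := by
  induction K with
  | zero => simp
  | succ K ih =>
    rw [Finset.prod_range_succ, ← mul_assoc, ih,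
      show N + (K+1) = (N+K)+1 from rfl, Nat.factorial_succ]
    push_cast
    ring

lemma prod_ne (N K : ℕ) : (∏ i ∈ Finset.range K, ((N:ℂ) + 1 + i)) ≠ 0 := by
  intro h0
  have := prod_fact N K
  rw [h0, mul_zero] at this
  exact (Nat.cast_ne_zero.mpr (N + K).factorial_ne_zero) this.symm

def c1 (j : ℤ) (N : ℕ) : ℂ :=
  (((N+1).factorial : ℂ)) / (((((N:ℤ) - j).toNat).factorial : ℂ))

lemma hc1 (h : ℝ) (hh : h = 1) (L : ℤ → E)
    (hLpos : ∀ k : ℕ, L (k : ℤ) = Mz * Dop ^ (k + 1) + (((k : ℂ) + 1) * (h : ℂ)) • Dop ^ k)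
    (hLneg : ∀ k : ℕ, 1 ≤ k → ∀ n : ℕ,
      L (-(k : ℤ)) (X ^ n) =
        (((n : ℂ) + ((k : ℂ) + 1) * (h : ℂ)) /
            ∏ i ∈ Finset.range k, ((n : ℂ) + 2 * h + (i : ℂ))) • X ^ (n + k)) :
    ∀ (j : ℤ) (N : ℕ), j ≤ (N:ℤ) → L j (X ^ N) = c1 j N • X ^ (((N:ℤ) - j).toNat) := by
  subst hh
  intro j N hj
  cases j with
  | ofNat k =>
    have hk : k ≤ N := by rw [Int.ofNat_eq_natCast] at hj; exact_mod_cast hj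
    rw [show (Int.ofNat k) = (k : ℤ) from rfl, Lpos_apply 1 L hLpos k N]
    rw [show (((N:ℤ) - (k:ℤ)).toNat) = N - k by omega]
    congr 1
    have hd : ((N-k).factorial : ℂ) * (N.descFactorial k : ℂ) = (N.factorial : ℂ) := by
      exact_mod_cast congrArg (Nat.cast : ℕ → ℂ) (Nat.factorial_mul_descFactorial hk)
    rw [c1, show ((N:ℤ) - (k:ℤ)).toNat = N - k by omega]
    rw [eq_div_iff (Nat.cast_ne_zero.mpr (N-k).factorial_ne_zero)]
    rw [Nat.descFactorial_succ, Nat.factorial_succ]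
    push_cast [Nat.cast_sub hk]
    linear_combination ((N:ℂ) + 1) * hd
  | negSucc k =>
    have e := hLneg (k+1) (by omega) N
    rw [show (Int.negSucc k) = -((k+1 : ℕ) : ℤ) by rw [Int.negSucc_eq]; push_cast; ring, e]
    rw [show (((N:ℤ) - -((k+1:ℕ):ℤ)).toNat) = N + (k+1) by omega]
    congr 1
    rw [c1, show ((N:ℤ) - -((k+1:ℕ):ℤ)).toNat = N + (k+1) by omega]
    have hP : (∏ i ∈ Finset.range (k+1), ((N:ℂ) + 2 * ((1:ℝ):ℂ) + (i:ℂ)))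
        = ∏ i ∈ Finset.range (k+1), (((N+1:ℕ):ℂ) + 1 + (i:ℂ)) := by
      apply Finset.prod_congr rfl
      intro i _
      push_cast
      ring
    rw [hP, div_eq_div_iff (prod_ne (N+1) (k+1))
      (Nat.cast_ne_zero.mpr (N + (k+1)).factorial_ne_zero)]
    have pf := prod_fact (N+1) (k+1)
    have hfs : ((N+1+(k+1)).factorial : ℂ) = ((N+(k+1)) + 1) * ((N+(k+1)).factorial : ℂ) := by
      rw [show N+1+(k+1) = (N+(k+1))+1 by omega, Nat.factorial_succ]
      push_cast
      ring
    rw [hfs] at pf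
    push_cast at pf ⊢
    linear_combination -pf

lemma hid1 (n m : ℤ) (N : ℕ) (hN : 2 * (n.natAbs + m.natAbs) ≤ N) :
    c1 m N * c1 n (((N:ℤ) - m).toNat) - c1 n N * c1 m (((N:ℤ) - n).toNat)
      - ((n - m : ℤ) : ℂ) * c1 (n+m) N = 0 := by
  set A := ((N:ℤ) - m).toNat with hA
  set C := ((N:ℤ) - n).toNat with hC
  set B := ((N:ℤ) - (n+m)).toNat with hB
  unfold c1
  rw [show (((A:ℕ):ℤ) - n).toNat = B by omega, show (((C:ℕ):ℤ) - m).toNat = B by omega,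
    ← hA, ← hC, ← hB]
  have hAc : ((A:ℕ):ℂ) = (N:ℂ) - ((m:ℤ):ℂ) := by
    have : ((A:ℕ):ℤ) = (N:ℤ) - m := by omega
    exact_mod_cast congrArg (Int.cast : ℤ → ℂ) this
  have hCc : ((C:ℕ):ℂ) = (N:ℂ) - ((n:ℤ):ℂ) := by
    have : ((C:ℕ):ℤ) = (N:ℤ) - n := by omega
    exact_mod_cast congrArg (Int.cast : ℤ → ℂ) this
  have nzA : (A.factorial : ℂ) ≠ 0 := Nat.cast_ne_zero.mpr A.factorial_ne_zero
  have nzB : (B.factorial : ℂ) ≠ 0 := Nat.cast_ne_zero.mpr B.factorial_ne_zero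
  have nzC : (C.factorial : ℂ) ≠ 0 := Nat.cast_ne_zero.mpr C.factorial_ne_zero
  rw [Nat.factorial_succ A, Nat.factorial_succ C]
  push_cast
  rw [hAc, hCc]
  field_simp
  ring

def c2 (j : ℤ) (N : ℕ) : ℂ :=
  ((2*(N:ℂ) - (j:ℂ) + 1)/2) * ((N.factorial : ℂ) / ((((N:ℤ) - j).toNat).factorial : ℂ))

lemma hc2 (h : ℝ) (hh : h = 1/2) (L : ℤ → E)
    (hLpos : ∀ k : ℕ, L (k : ℤ) = Mz * Dop ^ (k + 1) + (((k : ℂ) + 1) * (h : ℂ)) • Dop ^ k)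
    (hLneg : ∀ k : ℕ, 1 ≤ k → ∀ n : ℕ,
      L (-(k : ℤ)) (X ^ n) =
        (((n : ℂ) + ((k : ℂ) + 1) * (h : ℂ)) /
            ∏ i ∈ Finset.range k, ((n : ℂ) + 2 * h + (i : ℂ))) • X ^ (n + k)) :
    ∀ (j : ℤ) (N : ℕ), j ≤ (N:ℤ) → L j (X ^ N) = c2 j N • X ^ (((N:ℤ) - j).toNat) := by
  subst hh
  intro j N hj
  cases j with
  | ofNat k =>
    have hk : k ≤ N := by rw [Int.ofNat_eq_natCast] at hj; exact_mod_cast hj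
    rw [show (Int.ofNat k) = (k : ℤ) from rfl, Lpos_apply (1/2) L hLpos k N]
    rw [show (((N:ℤ) - (k:ℤ)).toNat) = N - k by omega]
    congr 1
    have hd : ((N-k).factorial : ℂ) * (N.descFactorial k : ℂ) = (N.factorial : ℂ) := by
      exact_mod_cast congrArg (Nat.cast : ℕ → ℂ) (Nat.factorial_mul_descFactorial hk)
    have nz : ((N-k).factorial : ℂ) ≠ 0 := Nat.cast_ne_zero.mpr (N-k).factorial_ne_zero
    rw [c2, show ((N:ℤ) - (k:ℤ)).toNat = N - k by omega]
    rw [Nat.descFactorial_succ]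
    push_cast [Nat.cast_sub hk]
    field_simp
    linear_combination (2*(N:ℂ) - k + 1) * hd
  | negSucc k =>
    have e := hLneg (k+1) (by omega) N
    rw [show (Int.negSucc k) = -((k+1 : ℕ) : ℤ) by rw [Int.negSucc_eq]; push_cast; ring, e]
    rw [show (((N:ℤ) - -((k+1:ℕ):ℤ)).toNat) = N + (k+1) by omega]
    congr 1
    rw [c2, show ((N:ℤ) - -((k+1:ℕ):ℤ)).toNat = N + (k+1) by omega]
    have hP : (∏ i ∈ Finset.range (k+1), ((N:ℂ) + 2 * ((1/2:ℝ):ℂ) + (i:ℂ)))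
        = ∏ i ∈ Finset.range (k+1), ((N:ℂ) + 1 + (i:ℂ)) := by
      apply Finset.prod_congr rfl
      intro i _
      push_cast
      ring
    have pf := prod_fact N (k+1)
    have nz : ((N+(k+1)).factorial : ℂ) ≠ 0 := Nat.cast_ne_zero.mpr (N+(k+1)).factorial_ne_zero
    rw [hP]
    have hpne := prod_ne N (k+1)
    push_cast at pf ⊢
    field_simp
    rw [show N + (k+1) = N + k + 1 by omega] at pf
    linear_combination (-(2*(N:ℂ) + k + 2)) * pf

lemma hid2 (n m : ℤ) (N : ℕ) (hN : 2 * (n.natAbs + m.natAbs) ≤ N) :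
    c2 m N * c2 n (((N:ℤ) - m).toNat) - c2 n N * c2 m (((N:ℤ) - n).toNat)
      - ((n - m : ℤ) : ℂ) * c2 (n+m) N = 0 := by
  set A := ((N:ℤ) - m).toNat with hA
  set C := ((N:ℤ) - n).toNat with hC
  set B := ((N:ℤ) - (n+m)).toNat with hB
  unfold c2
  rw [show (((A:ℕ):ℤ) - n).toNat = B by omega, show (((C:ℕ):ℤ) - m).toNat = B by omega,
    ← hA, ← hC, ← hB]
  have hAc : ((A:ℕ):ℂ) = (N:ℂ) - ((m:ℤ):ℂ) := by
    have : ((A:ℕ):ℤ) = (N:ℤ) - m := by omega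
    exact_mod_cast congrArg (Int.cast : ℤ → ℂ) this
  have hCc : ((C:ℕ):ℂ) = (N:ℂ) - ((n:ℤ):ℂ) := by
    have : ((C:ℕ):ℤ) = (N:ℤ) - n := by omega
    exact_mod_cast congrArg (Int.cast : ℤ → ℂ) this
  have nzA : (A.factorial : ℂ) ≠ 0 := Nat.cast_ne_zero.mpr A.factorial_ne_zero
  have nzB : (B.factorial : ℂ) ≠ 0 := Nat.cast_ne_zero.mpr B.factorial_ne_zero
  have nzC : (C.factorial : ℂ) ≠ 0 := Nat.cast_ne_zero.mpr C.factorial_ne_zero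
  push_cast
  rw [hAc, hCc]
  field_simp
  ring

/-- For `h = 1` or `h = 1/2`, the HS-projective representation of the Witt
algebra by q_R-conformal symmetries is FR-projective: each defect operator
`[Lₙ, Lₘ] − (n − m)·L_{n+m}` has finite rank (finite-dimensional range). -/
theorem stmt_14 (h : ℝ) (hh : h = 1 ∨ h = 1 / 2)
    (L : ℤ → E)
    (hLpos : ∀ k : ℕ, L (k : ℤ) = Mz * Dop ^ (k + 1) + (((k : ℂ) + 1) * (h : ℂ)) • Dop ^ k)
    (hLneg : ∀ k : ℕ, 1 ≤ k → ∀ n : ℕ,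
      L (-(k : ℤ)) (X ^ n) =
        (((n : ℂ) + ((k : ℂ) + 1) * (h : ℂ)) /
            ∏ i ∈ Finset.range k, ((n : ℂ) + 2 * h + (i : ℂ))) • X ^ (n + k))
    :
    ∀ n m : ℤ,
      FiniteDimensional ℂ
        (LinearMap.range (opComm (L n) (L m) - ((n - m : ℤ) : ℂ) • L (n + m))) := by
  intro n m
  rcases hh with h1 | h1
  · exact key L c1 (hc1 h h1 L hLpos hLneg) hid1 n m
  · exact key L c2 (hc2 h h1 L hLpos hLneg) hid2 n m

end
end

section
/- Let h > 0. Then the commutator [L₂, L₋₂] acts diagonally on the monomial basis of ℂ[z]: for every integer n ≥ 2, [L₂, L₋₂](zⁿ) = λ_n(h)·zⁿ with λ_n(h) = (n+3h)²(n+1)(n+2)/((n+2h)(n+2h+1)) − (n+3h−2)²·n·(n−1)/((n+2h−1)(n+2h−2)), while for n ∈ {0, 1} one has [L₂, L₋₂](zⁿ) = ((n+3h)²(n+1)(n+2)/((n+2h)(n+2h+1)))·zⁿ (the second summand being absent). -/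
open Polynomial

noncomputable section

lemma D_pow (k : ℕ) : Dop ((X : Polynomial ℂ)^(k+1)) = ((k:ℂ)+1) • X^k := by
  simp [Dop, Polynomial.smul_eq_C_mul]

lemma L2_on_pow (h : ℝ) (n : ℕ) :
    (Mz * Dop ^ 3 + ((3 * h : ℝ) : ℂ) • Dop ^ 2) (X ^ (n+2) : Polynomial ℂ)
      = (((n:ℂ)+2) * ((n:ℂ)+1) * ((n:ℂ) + 3*h)) • X ^ n := by
  have h3 : Dop ((X : Polynomial ℂ)^n) = (n:ℂ) • X^(n-1) := by
    simp [Dop, derivative_X_pow, Polynomial.smul_eq_C_mul]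
  have h4 : (n:ℂ) • Mz ((X^(n-1) : Polynomial ℂ)) = (n:ℂ) • X^n := by
    cases n with
    | zero => simp
    | succ m => simp [Mz, pow_succ, mul_comm]
  have e2 : (Dop ^ 2 : E) (X ^ (n+2) : Polynomial ℂ)
      = (((n:ℂ)+2) * ((n:ℂ)+1)) • X^n := by
    rw [pow_two, Module.End.mul_apply, show n+2 = (n+1)+1 from rfl, D_pow,
      map_smul, D_pow, smul_smul]
    congr 1; push_cast; ring
  have e3 : (Mz * Dop ^ 3 : E) (X ^ (n+2) : Polynomial ℂ)
      = (((n:ℂ)+2) * ((n:ℂ)+1) * (n:ℂ)) • X^n := by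
    rw [Module.End.mul_apply, show (Dop^3 : E) = Dop * Dop^2 from by
      rw [pow_succ'], Module.End.mul_apply, e2, map_smul, h3,
      map_smul, map_smul, h4, smul_smul, mul_assoc]
  rw [LinearMap.add_apply, e3, LinearMap.smul_apply, e2, smul_smul, ← add_smul]
  congr 1
  push_cast
  ring

lemma cast_ne (k : ℕ) (a : ℝ) (ha : 0 < a) : ((k:ℂ) + a) ≠ 0 := by
  rw [show ((k:ℂ) + a) = (((k:ℝ) + a : ℝ) : ℂ) by push_cast; ring]
  exact Complex.ofReal_ne_zero.mpr (by positivity)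

set_option maxHeartbeats 1000000 in
/-- For `h > 0`, the commutator `[L₂, L₋₂]` acts diagonally on the monomial
basis: for `n ≥ 2`, `[L₂,L₋₂](zⁿ) = λₙ(h)·zⁿ` with
`λₙ(h) = (n+3h)²(n+1)(n+2)/((n+2h)(n+2h+1)) − (n+3h−2)²n(n−1)/((n+2h−1)(n+2h−2))`,
while for `n ∈ {0,1}` only the first summand occurs. -/
theorem stmt_16 (h : ℝ) (hpos : 0 < h)
    (L2 : E) (hL2 : L2 = Mz * Dop ^ 3 + ((3 * h : ℝ) : ℂ) • Dop ^ 2)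
    (Lm2 : E) (hLm2 : ∀ n : ℕ,
      Lm2 (X ^ n) =
        (((n : ℂ) + 3 * h) / (((n : ℂ) + 2 * h) * ((n : ℂ) + 2 * h + 1))) • X ^ (n + 2)) :
    (∀ n : ℕ, 2 ≤ n →
      opComm L2 Lm2 (X ^ n) =
        (((n : ℂ) + 3 * h) ^ 2 * ((n : ℂ) + 1) * ((n : ℂ) + 2) /
            (((n : ℂ) + 2 * h) * ((n : ℂ) + 2 * h + 1)) -
          ((n : ℂ) + 3 * h - 2) ^ 2 * (n : ℂ) * ((n : ℂ) - 1) /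
            (((n : ℂ) + 2 * h - 1) * ((n : ℂ) + 2 * h - 2))) • X ^ n) ∧
    (∀ n : ℕ, n = 0 ∨ n = 1 →
      opComm L2 Lm2 (X ^ n) =
        (((n : ℂ) + 3 * h) ^ 2 * ((n : ℂ) + 1) * ((n : ℂ) + 2) /
            (((n : ℂ) + 2 * h) * ((n : ℂ) + 2 * h + 1))) • X ^ n) := by
  constructor
  · intro n hn
    obtain ⟨k, rfl⟩ : ∃ k, n = k + 2 := ⟨n - 2, by omega⟩
    have A : ((k:ℂ) + 2*h) ≠ 0 := by
      have := cast_ne k (2*h) (by positivity); push_cast at this; exact this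
    have B : ((k:ℂ) + 2*h + 1) ≠ 0 := by
      have := cast_ne k (2*h+1) (by positivity); push_cast at this
      intro hc; exact this (by linear_combination hc)
    have Cc : ((k:ℂ) + 2 + 2*h) ≠ 0 := by
      have := cast_ne k (2*h+2) (by positivity); push_cast at this
      intro hc; exact this (by linear_combination hc)
    have Dd : ((k:ℂ) + 2 + 2*h + 1) ≠ 0 := by
      have := cast_ne k (2*h+3) (by positivity); push_cast at this
      intro hc; exact this (by linear_combination hc)
    simp only [opComm, LinearMap.sub_apply, Module.End.mul_apply]
    rw [hLm2 (k+2), hL2, map_smul, L2_on_pow h (k+2), L2_on_pow h k, map_smul,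
      hLm2 k, smul_smul, smul_smul, ← sub_smul]
    congr 1
    push_cast
    rw [show ((k:ℂ) + 2 + 2 * (h:ℂ) - 1) * ((k:ℂ) + 2 + 2 * (h:ℂ) - 2)
        = ((k:ℂ) + 2 * (h:ℂ)) * ((k:ℂ) + 2 * (h:ℂ) + 1) from by ring]
    field_simp
    ring
  · intro n hn
    have A : ((n:ℂ) + 2*h) ≠ 0 := by
      have := cast_ne n (2*h) (by positivity); push_cast at this; exact this
    have B : ((n:ℂ) + 2*h + 1) ≠ 0 := by
      have := cast_ne n (2*h+1) (by positivity); push_cast at this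
      intro hc; exact this (by linear_combination hc)
    have d2 : (Dop ^ 2 : E) (X ^ n : Polynomial ℂ) = 0 := by
      rcases hn with rfl | rfl <;>
        · rw [pow_two, Module.End.mul_apply]; simp [Dop]
    have d3 : (Dop ^ 3 : E) (X ^ n : Polynomial ℂ) = 0 := by
      rw [show (Dop ^ 3 : E) = Dop * Dop ^ 2 from by rw [pow_succ'],
        Module.End.mul_apply, d2, map_zero]
    have hz : L2 (X ^ n : Polynomial ℂ) = 0 := by
      rw [hL2]
      simp only [LinearMap.add_apply, Module.End.mul_apply, LinearMap.smul_apply,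
        d3, d2, map_zero, smul_zero, add_zero]
    simp only [opComm, LinearMap.sub_apply, Module.End.mul_apply, hz, map_zero, sub_zero]
    rw [hLm2 n, hL2, map_smul, L2_on_pow h n, smul_smul]
    congr 1
    field_simp
end
end
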